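/- arXiv:1102.0426 — 6 statements merged into one kernel-verified Lean document; each statement's English description precedes it below -/
import Mathlib

section
/- With D a non-Lagrangian 2-distribution on U ⊆ ℝ⁴, D' its Ω-orthogonal complement, Z := P'([X,Y]) and Z' := P([X',Y']) the invariant vector fields, σ := ι_Z Ω − ι_{Z'} Ω, and ω the invariant 2-form with ω|_D = Ω|_D and kernel D': the exterior derivative of ω satisfies dω = ι_{Z−Z'}(½ Ω∧Ω) = Ω ∧ σ on U. -/
noncomputable section

/-- Vectors of `ℝ⁴`, with coordinates `(x,p,y,q) = (v 0, v 1, v 2, v 3)`. -/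
abbrev Vec : Type := Fin 4 → ℝ

/-- The standard symplectic form `Ω = dp∧dx + dq∧dy` on `ℝ⁴`. -/
def Omega (u v : Vec) : ℝ := u 1 * v 0 - u 0 * v 1 + u 3 * v 2 - u 2 * v 3

/-- Lie bracket of vector fields. -/
def vbracket (X Y : Vec → Vec) : Vec → Vec :=
  fun x => fderiv ℝ Y x (X x) - fderiv ℝ X x (Y x)

/-- Exterior derivative of a 1-form (a pointwise family of 1-form values). -/
def d1 (α : Vec → Vec → ℝ) : Vec → Vec → Vec → ℝ :=
  fun x u v => fderiv ℝ (fun y => α y v) x u - fderiv ℝ (fun y => α y u) x v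

/-- Exterior derivative of a 2-form. -/
def d2 (b : Vec → Vec → Vec → ℝ) : Vec → Vec → Vec → Vec → ℝ :=
  fun x u v w => fderiv ℝ (fun y => b y v w) x u - fderiv ℝ (fun y => b y u w) x v
    + fderiv ℝ (fun y => b y u v) x w

/-- Exterior derivative of a 3-form. -/
def d3 (c : Vec → Vec → Vec → Vec → ℝ) : Vec → Vec → Vec → Vec → Vec → ℝ :=
  fun x u v w z =>
    fderiv ℝ (fun y => c y v w z) x u - fderiv ℝ (fun y => c y u w z) x v
      + fderiv ℝ (fun y => c y u v z) x w - fderiv ℝ (fun y => c y u v w) x z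

/-- Wedge product of two 1-form values. -/
def w11 (a b : Vec → ℝ) : Vec → Vec → ℝ := fun u v => a u * b v - a v * b u

/-- Wedge product of a 2-form value with a 1-form value. -/
def w21 (b : Vec → Vec → ℝ) (t : Vec → ℝ) : Vec → Vec → Vec → ℝ :=
  fun u v w => b u v * t w - b u w * t v + b v w * t u

/-- Wedge product of two 2-form values. -/
def w22 (a b : Vec → Vec → ℝ) : Vec → Vec → Vec → Vec → ℝ :=
  fun u v w z => a u v * b w z - a u w * b v z + a u z * b v w
    + a v w * b u z - a v z * b u w + a w z * b u v

/-! ### Auxiliary algebraic lemmas about `Omega` -/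

lemma Omega_antisymm (a b : Vec) : Omega a b = -Omega b a := by simp [Omega]; ring
lemma Omega_add_left (a b c : Vec) : Omega (a + b) c = Omega a c + Omega b c := by
  simp [Omega]; ring
lemma Omega_add_right (a b c : Vec) : Omega a (b + c) = Omega a b + Omega a c := by
  simp [Omega]; ring
lemma Omega_sub_left (a b c : Vec) : Omega (a - b) c = Omega a c - Omega b c := by
  simp [Omega]; ring
lemma Omega_sub_right (a b c : Vec) : Omega a (b - c) = Omega a b - Omega a c := by
  simp [Omega]; ring
lemma Omega_smul_left (r : ℝ) (a c : Vec) : Omega (r • a) c = r * Omega a c := by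
  simp [Omega]; ring
lemma Omega_smul_right (r : ℝ) (a c : Vec) : Omega a (r • c) = r * Omega a c := by
  simp [Omega]; ring
lemma Omega_neg_left (a c : Vec) : Omega (-a) c = -Omega a c := by simp [Omega]; ring
lemma Omega_neg_right (a c : Vec) : Omega a (-c) = -Omega a c := by simp [Omega]; ring
lemma Omega_zero_left (c : Vec) : Omega 0 c = 0 := by simp [Omega]
lemma Omega_zero_right (c : Vec) : Omega c 0 = 0 := by simp [Omega]
lemma Omega_self (a : Vec) : Omega a a = 0 := by simp [Omega]; ring

/-- `Omega · w` as a continuous linear map. -/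
def omR (w : Vec) : Vec →L[ℝ] ℝ :=
  LinearMap.toContinuousLinearMap
    { toFun := fun a => Omega a w
      map_add' := fun a b => Omega_add_left a b w
      map_smul' := fun r a => by simpa using Omega_smul_left r a w }

@[simp] lemma omR_apply (w a : Vec) : omR w a = Omega a w := rfl

/-- Derivative of `y ↦ Ω(f y, g y)`. -/
lemma hasFDerivAt_omega₂ {x : Vec} {f g : Vec → Vec} {f' g' : Vec →L[ℝ] Vec}
    (hf : HasFDerivAt f f' x) (hg : HasFDerivAt g g' x) :
    HasFDerivAt (fun y => Omega (f y) (g y))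
      ((omR (g x)).comp f' - (omR (f x)).comp g') x := by
  have pr : ∀ i : Fin 4, ∀ (h : Vec → Vec) (h' : Vec →L[ℝ] Vec), HasFDerivAt h h' x →
      HasFDerivAt (fun y => h y i) ((ContinuousLinearMap.proj i).comp h') x :=
    fun i h h' hh =>
      (((ContinuousLinearMap.proj (R := ℝ) (φ := fun _ : Fin 4 => ℝ) i).hasFDerivAt.comp x
        hh).congr_of_eventuallyEq (Filter.Eventually.of_forall fun y => rfl))
  have h := ((((pr 1 f f' hf).mul (pr 0 g g' hg)).sub ((pr 0 f f' hf).mul (pr 1 g g' hg))).add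
      ((pr 3 f f' hf).mul (pr 2 g g' hg))).sub ((pr 2 f f' hf).mul (pr 3 g g' hg))
  have heq : (omR (g x)).comp f' - (omR (f x)).comp g' =
      ((f x 1 • (ContinuousLinearMap.proj 0).comp g' + g x 0 • (ContinuousLinearMap.proj 1).comp f' -
        (f x 0 • (ContinuousLinearMap.proj 1).comp g' + g x 1 • (ContinuousLinearMap.proj 0).comp f')) +
      (f x 3 • (ContinuousLinearMap.proj 2).comp g' + g x 2 • (ContinuousLinearMap.proj 3).comp f')) -
        (f x 2 • (ContinuousLinearMap.proj 3).comp g' + g x 3 • (ContinuousLinearMap.proj 2).comp f') := by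
    ext a
    simp [Omega]
    ring
  rw [heq]
  exact h

/-! ### The pointwise trilinear difference and its algebraic properties -/

/-- The difference `dω(u,v,w) − (Ω∧σ)(u,v,w)` in closed form at a point,
where `DP` is the derivative of the projector field and `s` is the value of `σ`. -/
def Hfun (DP : Vec →L[ℝ] Vec →L[ℝ] Vec) (s : Vec → ℝ) (u v w : Vec) : ℝ :=
  (Omega (DP u v) w - Omega (DP u w) v - Omega (DP v u) w + Omega (DP v w) u
    + Omega (DP w u) v - Omega (DP w v) u) / 2
  - (Omega u v * s w - Omega u w * s v + Omega v w * s u)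

lemma Hfun_swap12 (DP : Vec →L[ℝ] Vec →L[ℝ] Vec) (s : Vec → ℝ) (u v w : Vec) :
    Hfun DP s v u w = -Hfun DP s u v w := by
  simp only [Hfun, Omega]; ring

lemma Hfun_swap23 (DP : Vec →L[ℝ] Vec →L[ℝ] Vec) (s : Vec → ℝ) (u v w : Vec) :
    Hfun DP s u w v = -Hfun DP s u v w := by
  simp only [Hfun, Omega]; ring

section lin
variable (DP : Vec →L[ℝ] Vec →L[ℝ] Vec) {s : Vec → ℝ}

lemma Hfun_add1 (hsa : ∀ a b, s (a + b) = s a + s b) (u u' v w : Vec) :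
    Hfun DP s (u + u') v w = Hfun DP s u v w + Hfun DP s u' v w := by
  simp only [Hfun, map_add, ContinuousLinearMap.add_apply, Omega_add_left, Omega_add_right, hsa]
  ring

lemma Hfun_add2 (hsa : ∀ a b, s (a + b) = s a + s b) (u v v' w : Vec) :
    Hfun DP s u (v + v') w = Hfun DP s u v w + Hfun DP s u v' w := by
  simp only [Hfun, map_add, ContinuousLinearMap.add_apply, Omega_add_left, Omega_add_right, hsa]
  ring

lemma Hfun_add3 (hsa : ∀ a b, s (a + b) = s a + s b) (u v w w' : Vec) :
    Hfun DP s u v (w + w') = Hfun DP s u v w + Hfun DP s u v w' := by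
  simp only [Hfun, map_add, ContinuousLinearMap.add_apply, Omega_add_left, Omega_add_right, hsa]
  ring

lemma Hfun_smul1 (hsm : ∀ (c : ℝ) a, s (c • a) = c * s a) (c : ℝ) (u v w : Vec) :
    Hfun DP s (c • u) v w = c * Hfun DP s u v w := by
  simp only [Hfun, map_smul, ContinuousLinearMap.smul_apply, Omega_smul_left, Omega_smul_right,
    hsm, smul_eq_mul]
  ring

lemma Hfun_smul2 (hsm : ∀ (c : ℝ) a, s (c • a) = c * s a) (c : ℝ) (u v w : Vec) :
    Hfun DP s u (c • v) w = c * Hfun DP s u v w := by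
  simp only [Hfun, map_smul, ContinuousLinearMap.smul_apply, Omega_smul_left, Omega_smul_right,
    hsm, smul_eq_mul]
  ring

lemma Hfun_smul3 (hsm : ∀ (c : ℝ) a, s (c • a) = c * s a) (c : ℝ) (u v w : Vec) :
    Hfun DP s u v (c • w) = c * Hfun DP s u v w := by
  simp only [Hfun, map_smul, ContinuousLinearMap.smul_apply, Omega_smul_left, Omega_smul_right,
    hsm, smul_eq_mul]
  ring

end lin

/-- An alternating trilinear expression vanishing on increasing basis triples vanishes on
all basis triples. -/
lemma alt_basis (H : Vec → Vec → Vec → ℝ) (e : Fin 4 → Vec)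
    (s12 : ∀ u v w, H v u w = -H u v w) (s23 : ∀ u v w, H u w v = -H u v w)
    (h0 : H (e 0) (e 1) (e 2) = 0) (h1 : H (e 0) (e 1) (e 3) = 0)
    (h2 : H (e 0) (e 2) (e 3) = 0) (h3 : H (e 1) (e 2) (e 3) = 0) :
    ∀ i j k, H (e i) (e j) (e k) = 0 := by
  have d12 : ∀ u w, H u u w = 0 := fun u w => by have := s12 u u w; linarith
  have d23 : ∀ u w, H u w w = 0 := fun u w => by have := s23 u w w; linarith
  have d13 : ∀ u v, H u v u = 0 := fun u v => by
    have h := s12 u v u; have := d23 v u; linarith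
  have p0a : H (e 1) (e 0) (e 2) = 0 := by rw [s12, h0]; simp
  have p0b : H (e 0) (e 2) (e 1) = 0 := by rw [s23, h0]; simp
  have p0c : H (e 1) (e 2) (e 0) = 0 := by rw [s23, p0a]; simp
  have p0d : H (e 2) (e 0) (e 1) = 0 := by rw [s12, p0b]; simp
  have p0e : H (e 2) (e 1) (e 0) = 0 := by rw [s12, p0c]; simp
  have p1a : H (e 1) (e 0) (e 3) = 0 := by rw [s12, h1]; simp
  have p1b : H (e 0) (e 3) (e 1) = 0 := by rw [s23, h1]; simp
  have p1c : H (e 1) (e 3) (e 0) = 0 := by rw [s23, p1a]; simp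
  have p1d : H (e 3) (e 0) (e 1) = 0 := by rw [s12, p1b]; simp
  have p1e : H (e 3) (e 1) (e 0) = 0 := by rw [s12, p1c]; simp
  have p2a : H (e 2) (e 0) (e 3) = 0 := by rw [s12, h2]; simp
  have p2b : H (e 0) (e 3) (e 2) = 0 := by rw [s23, h2]; simp
  have p2c : H (e 2) (e 3) (e 0) = 0 := by rw [s23, p2a]; simp
  have p2d : H (e 3) (e 0) (e 2) = 0 := by rw [s12, p2b]; simp
  have p2e : H (e 3) (e 2) (e 0) = 0 := by rw [s12, p2c]; simp
  have p3a : H (e 2) (e 1) (e 3) = 0 := by rw [s12, h3]; simp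
  have p3b : H (e 1) (e 3) (e 2) = 0 := by rw [s23, h3]; simp
  have p3c : H (e 2) (e 3) (e 1) = 0 := by rw [s23, p3a]; simp
  have p3d : H (e 3) (e 1) (e 2) = 0 := by rw [s12, p3b]; simp
  have p3e : H (e 3) (e 2) (e 1) = 0 := by rw [s12, p3c]; simp
  intro i j k
  fin_cases i <;> fin_cases j <;> fin_cases k <;>
    first
      | exact h0 | exact h1 | exact h2 | exact h3
      | exact p0a | exact p0b | exact p0c | exact p0d | exact p0e
      | exact p1a | exact p1b | exact p1c | exact p1d | exact p1e
      | exact p2a | exact p2b | exact p2c | exact p2d | exact p2e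
      | exact p3a | exact p3b | exact p3c | exact p3d | exact p3e
      | exact d12 _ _ | exact d23 _ _ | exact d13 _ _

/-- A trilinear expression vanishing on all basis triples vanishes on vectors that are
combinations of the basis. -/
lemma trilinear_zero (DP : Vec →L[ℝ] Vec →L[ℝ] Vec) (s : Vec → ℝ)
    (hsa : ∀ a b, s (a + b) = s a + s b) (hsm : ∀ (c : ℝ) a, s (c • a) = c * s a)
    (e : Fin 4 → Vec) (hb : ∀ i j k, Hfun DP s (e i) (e j) (e k) = 0)
    (u v w : Vec)
    (hu : ∃ c : Fin 4 → ℝ, u = c 0 • e 0 + c 1 • e 1 + c 2 • e 2 + c 3 • e 3)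
    (hv : ∃ c : Fin 4 → ℝ, v = c 0 • e 0 + c 1 • e 1 + c 2 • e 2 + c 3 • e 3)
    (hw : ∃ c : Fin 4 → ℝ, w = c 0 • e 0 + c 1 • e 1 + c 2 • e 2 + c 3 • e 3) :
    Hfun DP s u v w = 0 := by
  obtain ⟨a, ha⟩ := hu
  obtain ⟨b, hb'⟩ := hv
  obtain ⟨c, hc⟩ := hw
  rw [ha, hb', hc]
  simp only [Hfun_add1 DP hsa, Hfun_add2 DP hsa, Hfun_add3 DP hsa,
    Hfun_smul1 DP hsm, Hfun_smul2 DP hsm, Hfun_smul3 DP hsm, hb,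
    mul_zero, add_zero, zero_add]

/-- for a non-Lagrangian 2-distribution `D` on `U ⊆ ℝ⁴`, the
invariant 2-form `ω` satisfies `dω = ι_{Z−Z'}(½ Ω∧Ω) = Ω ∧ σ` on `U`. -/
theorem stmt_6
    (U : Set Vec) (hU : IsOpen U)
    (X Y X' Y' : Vec → Vec) (P : Vec → Vec →L[ℝ] Vec)
    (hX : ContDiffOn ℝ (⊤ : ℕ∞) X U) (hY : ContDiffOn ℝ (⊤ : ℕ∞) Y U)
    (hX' : ContDiffOn ℝ (⊤ : ℕ∞) X' U) (hY' : ContDiffOn ℝ (⊤ : ℕ∞) Y' U)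
    (hP : ContDiffOn ℝ (⊤ : ℕ∞) P U)
    (hXY : ∀ x ∈ U, Omega (X x) (Y x) = 1)
    (hX'Y' : ∀ x ∈ U, Omega (X' x) (Y' x) = 1)
    (horth : ∀ x ∈ U, Omega (X x) (X' x) = 0 ∧ Omega (X x) (Y' x) = 0 ∧
      Omega (Y x) (X' x) = 0 ∧ Omega (Y x) (Y' x) = 0)
    (hProj : ∀ x ∈ U, P x (X x) = X x ∧ P x (Y x) = Y x ∧
      P x (X' x) = 0 ∧ P x (Y' x) = 0)
    (Z Z' : Vec → Vec)
    (hZ : Z = fun x => vbracket X Y x - P x (vbracket X Y x))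
    (hZ' : Z' = fun x => P x (vbracket X' Y' x))
    (ρ ρ' σ : Vec → Vec → ℝ)
    (hρ : ρ = fun x v => Omega (Z x) v)
    (hρ' : ρ' = fun x v => Omega (Z' x) v)
    (hσ : σ = fun x v => ρ x v - ρ' x v)
    (ω : Vec → Vec → Vec → ℝ)
    (hω : ω = fun x u v => (Omega (P x u) v + Omega u (P x v)) / 2)
    :
    ∀ x ∈ U, ∀ u v w : Vec,
      d2 ω x u v w = w22 Omega Omega (Z x - Z' x) u v w / 2 ∧
      d2 ω x u v w = w21 Omega (σ x) u v w := by
  intro x hx u v w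
  have hmem : U ∈ nhds x := hU.mem_nhds hx
  -- differentiability of all data at x
  have hXd : HasFDerivAt X (fderiv ℝ X x) x :=
    ((hX.contDiffAt hmem).differentiableAt (by simp)).hasFDerivAt
  have hYd : HasFDerivAt Y (fderiv ℝ Y x) x :=
    ((hY.contDiffAt hmem).differentiableAt (by simp)).hasFDerivAt
  have hX'd : HasFDerivAt X' (fderiv ℝ X' x) x :=
    ((hX'.contDiffAt hmem).differentiableAt (by simp)).hasFDerivAt
  have hY'd : HasFDerivAt Y' (fderiv ℝ Y' x) x :=
    ((hY'.contDiffAt hmem).differentiableAt (by simp)).hasFDerivAt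
  have hPd : HasFDerivAt P (fderiv ℝ P x) x :=
    ((hP.contDiffAt hmem).differentiableAt (by simp)).hasFDerivAt
  -- Gram matrix values at x
  have g01 : Omega (X x) (Y x) = 1 := hXY x hx
  have g23 : Omega (X' x) (Y' x) = 1 := hX'Y' x hx
  obtain ⟨g02, g03, g12, g13⟩ := horth x hx
  have g10 : Omega (Y x) (X x) = -1 := by rw [Omega_antisymm, g01]
  have g32 : Omega (Y' x) (X' x) = -1 := by rw [Omega_antisymm, g23]
  have g20 : Omega (X' x) (X x) = 0 := by rw [Omega_antisymm, g02]; ring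
  have g30 : Omega (Y' x) (X x) = 0 := by rw [Omega_antisymm, g03]; ring
  have g21 : Omega (X' x) (Y x) = 0 := by rw [Omega_antisymm, g12]; ring
  have g31 : Omega (Y' x) (Y x) = 0 := by rw [Omega_antisymm, g13]; ring
  obtain ⟨pr0, pr1, pr2, pr3⟩ := hProj x hx
  -- the frame spans ℝ⁴
  have hspan : ∀ v : Vec, ∃ c : Fin 4 → ℝ,
      v = c 0 • X x + c 1 • Y x + c 2 • X' x + c 3 • Y' x := by
    let L : Vec →ₗ[ℝ] Vec :=
      { toFun := fun c => c 0 • X x + c 1 • Y x + c 2 • X' x + c 3 • Y' x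
        map_add' := fun a b => by
          simp only [Pi.add_apply, add_smul]; abel
        map_smul' := fun m a => by
          simp only [Pi.smul_apply, smul_eq_mul, mul_smul, RingHom.id_apply, smul_add] }
    have hker : ∀ c : Vec, L c = 0 → c = 0 := by
      intro c hc
      have e1 := congrArg (fun t => Omega t (Y x)) hc
      have e2 := congrArg (fun t => Omega t (X x)) hc
      have e3 := congrArg (fun t => Omega t (Y' x)) hc
      have e4 := congrArg (fun t => Omega t (X' x)) hc
      simp only [L, LinearMap.coe_mk, AddHom.coe_mk, Omega_add_left, Omega_smul_left,
        Omega_zero_left, Omega_self, g01, g10, g23, g32, g02, g03, g12, g13, g20, g30, g21, g31,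
        mul_one, mul_zero, mul_neg, add_zero, zero_add, neg_eq_zero] at e1 e2 e3 e4
      have hc0 : c 0 = 0 := by linarith
      have hc1 : c 1 = 0 := by linarith
      have hc2 : c 2 = 0 := by linarith
      have hc3 : c 3 = 0 := by linarith
      funext i
      fin_cases i <;> simp only [Pi.zero_apply] <;>
        first | exact hc0 | exact hc1 | exact hc2 | exact hc3
    have hinj : Function.Injective L := by
      rw [← LinearMap.ker_eq_bot, LinearMap.ker_eq_bot']
      exact fun m hm => hker m hm
    have hsurj := LinearMap.injective_iff_surjective.mp hinj
    intro v
    obtain ⟨c, hc⟩ := hsurj v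
    exact ⟨c, hc.symm⟩
  -- orthogonality properties of the projector at x
  have hPo2 : ∀ t : Vec, Omega (P x t) (X' x) = 0 := by
    intro t
    obtain ⟨c, hc⟩ := hspan t
    rw [hc]
    simp [map_add, map_smul, pr0, pr1, pr2, pr3, Omega_add_left, Omega_smul_left,
      Omega_zero_left, g02, g12, smul_zero]
  have hPo3 : ∀ t : Vec, Omega (P x t) (Y' x) = 0 := by
    intro t
    obtain ⟨c, hc⟩ := hspan t
    rw [hc]
    simp [map_add, map_smul, pr0, pr1, pr2, pr3, Omega_add_left, Omega_smul_left,
      Omega_zero_left, g03, g13, smul_zero]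
  have hPo0 : ∀ t : Vec, Omega (P x t) (X x) = Omega t (X x) := by
    intro t
    obtain ⟨c, hc⟩ := hspan t
    rw [hc]
    simp [map_add, map_smul, pr0, pr1, pr2, pr3, Omega_add_left, Omega_smul_left,
      Omega_zero_left, Omega_self, g10, g20, g30, smul_zero]
  have hPo1 : ∀ t : Vec, Omega (P x t) (Y x) = Omega t (Y x) := by
    intro t
    obtain ⟨c, hc⟩ := hspan t
    rw [hc]
    simp [map_add, map_smul, pr0, pr1, pr2, pr3, Omega_add_left, Omega_smul_left,
      Omega_zero_left, Omega_self, g01, g21, g31, smul_zero]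
  -- derivatives of the projector identities
  have hQ1 : ∀ a : Vec, fderiv ℝ P x a (X x) = fderiv ℝ X x a - P x (fderiv ℝ X x a) := by
    intro a
    have heq : (fun y => P y (X y)) =ᶠ[nhds x] X :=
      Filter.eventuallyEq_of_mem hmem fun y hy => (hProj y hy).1
    have h := heq.fderiv_eq (𝕜 := ℝ)
    rw [(hPd.clm_apply hXd).fderiv] at h
    have h2 := congrArg (fun L : Vec →L[ℝ] Vec => L a) h
    simp only [ContinuousLinearMap.add_apply, ContinuousLinearMap.coe_comp', Function.comp_apply,
      ContinuousLinearMap.flip_apply] at h2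
    exact eq_sub_of_add_eq' h2
  have hQ2 : ∀ a : Vec, fderiv ℝ P x a (Y x) = fderiv ℝ Y x a - P x (fderiv ℝ Y x a) := by
    intro a
    have heq : (fun y => P y (Y y)) =ᶠ[nhds x] Y :=
      Filter.eventuallyEq_of_mem hmem fun y hy => (hProj y hy).2.1
    have h := heq.fderiv_eq (𝕜 := ℝ)
    rw [(hPd.clm_apply hYd).fderiv] at h
    have h2 := congrArg (fun L : Vec →L[ℝ] Vec => L a) h
    simp only [ContinuousLinearMap.add_apply, ContinuousLinearMap.coe_comp', Function.comp_apply,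
      ContinuousLinearMap.flip_apply] at h2
    exact eq_sub_of_add_eq' h2
  have hQ3 : ∀ a : Vec, fderiv ℝ P x a (X' x) = -(P x (fderiv ℝ X' x a)) := by
    intro a
    have heq : (fun y => P y (X' y)) =ᶠ[nhds x] (fun _ => (0 : Vec)) :=
      Filter.eventuallyEq_of_mem hmem fun y hy => (hProj y hy).2.2.1
    have h := heq.fderiv_eq (𝕜 := ℝ)
    rw [(hPd.clm_apply hX'd).fderiv, fderiv_const_apply] at h
    have h2 := congrArg (fun L : Vec →L[ℝ] Vec => L a) h
    simp only [ContinuousLinearMap.add_apply, ContinuousLinearMap.coe_comp', Function.comp_apply,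
      ContinuousLinearMap.flip_apply, ContinuousLinearMap.zero_apply] at h2
    exact eq_neg_of_add_eq_zero_right h2
  have hQ4 : ∀ a : Vec, fderiv ℝ P x a (Y' x) = -(P x (fderiv ℝ Y' x a)) := by
    intro a
    have heq : (fun y => P y (Y' y)) =ᶠ[nhds x] (fun _ => (0 : Vec)) :=
      Filter.eventuallyEq_of_mem hmem fun y hy => (hProj y hy).2.2.2
    have h := heq.fderiv_eq (𝕜 := ℝ)
    rw [(hPd.clm_apply hY'd).fderiv, fderiv_const_apply] at h
    have h2 := congrArg (fun L : Vec →L[ℝ] Vec => L a) h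
    simp only [ContinuousLinearMap.add_apply, ContinuousLinearMap.coe_comp', Function.comp_apply,
      ContinuousLinearMap.flip_apply, ContinuousLinearMap.zero_apply] at h2
    exact eq_neg_of_add_eq_zero_right h2
  -- derivatives of the orthogonality identities
  have hO : ∀ (F G : Vec → Vec), HasFDerivAt F (fderiv ℝ F x) x → HasFDerivAt G (fderiv ℝ G x) x →
      (∀ y ∈ U, Omega (F y) (G y) = 0) →
      ∀ a : Vec, Omega (fderiv ℝ F x a) (G x) = Omega (fderiv ℝ G x a) (F x) := by
    intro F G hF hG h0 a
    have heq : (fun y => Omega (F y) (G y)) =ᶠ[nhds x] (fun _ => (0 : ℝ)) :=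
      Filter.eventuallyEq_of_mem hmem fun y hy => h0 y hy
    have h := heq.fderiv_eq (𝕜 := ℝ)
    rw [(hasFDerivAt_omega₂ hF hG).fderiv, fderiv_const_apply] at h
    have h2 := congrArg (fun L : Vec →L[ℝ] ℝ => L a) h
    simp only [ContinuousLinearMap.sub_apply, ContinuousLinearMap.coe_comp',
      Function.comp_apply, omR_apply, ContinuousLinearMap.zero_apply] at h2
    have h3 := Omega_antisymm (F x) (fderiv ℝ G x a)
    linarith
  have hO1 := hO X X' hXd hX'd (fun y hy => (horth y hy).1)
  have hO2 := hO X Y' hXd hY'd (fun y hy => (horth y hy).2.1)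
  have hO3 := hO Y X' hYd hX'd (fun y hy => (horth y hy).2.2.1)
  have hO4 := hO Y Y' hYd hY'd (fun y hy => (horth y hy).2.2.2)
  -- value of the derivative of ω in a direction
  have hval : ∀ v w u : Vec,
      fderiv ℝ (fun y => (Omega (P y v) w + Omega v (P y w)) / 2) x u
        = (Omega (fderiv ℝ P x u v) w - Omega (fderiv ℝ P x u w) v) / 2 := by
    intro v w u
    have hPv : HasFDerivAt (fun y => P y v) ((fderiv ℝ P x).flip v) x := by
      have h := hPd.clm_apply (hasFDerivAt_const v x)
      simpa using h
    have hPw : HasFDerivAt (fun y => P y w) ((fderiv ℝ P x).flip w) x := by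
      have h := hPd.clm_apply (hasFDerivAt_const w x)
      simpa using h
    have h1 := hasFDerivAt_omega₂ hPv (hasFDerivAt_const w x)
    have h2 := hasFDerivAt_omega₂ (hasFDerivAt_const v x) hPw
    have hfun : (fun y => (Omega (P y v) w + Omega v (P y w)) / 2)
        = (fun y => (2⁻¹ : ℝ) • (Omega (P y v) w + Omega v (P y w))) := by
      funext y; simp [smul_eq_mul]; ring
    have h3 := (h1.add h2).const_smul (2⁻¹ : ℝ)
    rw [hfun, (show HasFDerivAt (fun y => (2⁻¹ : ℝ) • (Omega (P y v) w + Omega v (P y w))) _ x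
      from h3).fderiv]
    simp only [ContinuousLinearMap.coe_smul', Pi.smul_apply, ContinuousLinearMap.add_apply,
      ContinuousLinearMap.sub_apply, ContinuousLinearMap.coe_comp', Function.comp_apply,
      omR_apply, ContinuousLinearMap.zero_apply, ContinuousLinearMap.flip_apply,
      ContinuousLinearMap.coe_zero, Pi.zero_apply, Omega_zero_left, smul_eq_mul]
    simp [Omega]
    ring
  -- σ at x in explicit form
  have hsx : ∀ t : Vec, σ x t =
      Omega (vbracket X Y x - P x (vbracket X Y x)) t - Omega (P x (vbracket X' Y' x)) t := by
    intro t
    simp only [hσ, hρ, hρ', hZ, hZ']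
  have hsa : ∀ a b : Vec, σ x (a + b) = σ x a + σ x b := by
    intro a b; simp only [hsx, Omega_add_right]; ring
  have hsm : ∀ (c : ℝ) (a : Vec), σ x (c • a) = c * σ x a := by
    intro c a; simp only [hsx, Omega_smul_right]; ring
  -- the four core identities on the frame
  have hb0 : Hfun (fderiv ℝ P x) (σ x) (X x) (Y x) (X' x) = 0 := by
    simp only [Hfun, hQ1, hQ2, hQ3, hQ4, hsx, vbracket, map_sub, Omega_sub_left,
      Omega_neg_left, Omega_sub_right, hPo0, hPo1, hPo2, hPo3,
      g01, g02, g03, g12, g13, g23]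
    have o1 := hO1 (Y x); have o2 := hO3 (X x)
    ring_nf
    linarith [hO1 (X x), hO1 (Y x), hO1 (X' x), hO1 (Y' x),
      hO2 (X x), hO2 (Y x), hO2 (X' x), hO2 (Y' x),
      hO3 (X x), hO3 (Y x), hO3 (X' x), hO3 (Y' x),
      hO4 (X x), hO4 (Y x), hO4 (X' x), hO4 (Y' x)]
  have hb1 : Hfun (fderiv ℝ P x) (σ x) (X x) (Y x) (Y' x) = 0 := by
    simp only [Hfun, hQ1, hQ2, hQ3, hQ4, hsx, vbracket, map_sub, Omega_sub_left,
      Omega_neg_left, Omega_sub_right, hPo0, hPo1, hPo2, hPo3,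
      g01, g02, g03, g12, g13, g23]
    ring_nf
    linarith [hO1 (X x), hO1 (Y x), hO1 (X' x), hO1 (Y' x),
      hO2 (X x), hO2 (Y x), hO2 (X' x), hO2 (Y' x),
      hO3 (X x), hO3 (Y x), hO3 (X' x), hO3 (Y' x),
      hO4 (X x), hO4 (Y x), hO4 (X' x), hO4 (Y' x)]
  have hb2 : Hfun (fderiv ℝ P x) (σ x) (X x) (X' x) (Y' x) = 0 := by
    simp only [Hfun, hQ1, hQ2, hQ3, hQ4, hsx, vbracket, map_sub, Omega_sub_left,
      Omega_neg_left, Omega_sub_right, hPo0, hPo1, hPo2, hPo3,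
      g01, g02, g03, g12, g13, g23]
    ring_nf
    linarith [hO1 (X x), hO1 (Y x), hO1 (X' x), hO1 (Y' x),
      hO2 (X x), hO2 (Y x), hO2 (X' x), hO2 (Y' x),
      hO3 (X x), hO3 (Y x), hO3 (X' x), hO3 (Y' x),
      hO4 (X x), hO4 (Y x), hO4 (X' x), hO4 (Y' x)]
  have hb3 : Hfun (fderiv ℝ P x) (σ x) (Y x) (X' x) (Y' x) = 0 := by
    simp only [Hfun, hQ1, hQ2, hQ3, hQ4, hsx, vbracket, map_sub, Omega_sub_left,
      Omega_neg_left, Omega_sub_right, hPo0, hPo1, hPo2, hPo3,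
      g01, g02, g03, g12, g13, g23]
    ring_nf
    linarith [hO1 (X x), hO1 (Y x), hO1 (X' x), hO1 (Y' x),
      hO2 (X x), hO2 (Y x), hO2 (X' x), hO2 (Y' x),
      hO3 (X x), hO3 (Y x), hO3 (X' x), hO3 (Y' x),
      hO4 (X x), hO4 (Y x), hO4 (X' x), hO4 (Y' x)]
  -- basis vanishing, trilinearity, conclusion
  have hbasis := alt_basis (Hfun (fderiv ℝ P x) (σ x)) ![X x, Y x, X' x, Y' x]
    (Hfun_swap12 _ _) (Hfun_swap23 _ _)
    (by simpa using hb0) (by simpa using hb1) (by simpa using hb2) (by simpa using hb3)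
  have hdecomp : ∀ t : Vec, ∃ c : Fin 4 → ℝ,
      t = c 0 • (![X x, Y x, X' x, Y' x]) 0 + c 1 • (![X x, Y x, X' x, Y' x]) 1
        + c 2 • (![X x, Y x, X' x, Y' x]) 2 + c 3 • (![X x, Y x, X' x, Y' x]) 3 := by
    intro t
    obtain ⟨c, hc⟩ := hspan t
    exact ⟨c, by simpa using hc⟩
  have main : Hfun (fderiv ℝ P x) (σ x) u v w = 0 :=
    trilinear_zero (fderiv ℝ P x) (σ x) hsa hsm ![X x, Y x, X' x, Y' x] hbasis u v w
      (hdecomp u) (hdecomp v) (hdecomp w)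
  have hkey : d2 ω x u v w = w21 Omega (σ x) u v w := by
    simp only [Hfun] at main
    simp only [hω, d2, w21]
    rw [hval v w u, hval u w v, hval u v w]
    linarith [main]
  have hRR : w22 Omega Omega (Z x - Z' x) u v w / 2 = w21 Omega (σ x) u v w := by
    simp only [w22, w21, hσ, hρ, hρ', Omega, Pi.sub_apply]
    ring
  exact ⟨hkey.trans hRR.symm, hkey⟩
end
end

section
/- With D a non-Lagrangian 2-distribution on U ⊆ ℝ⁴ and the invariant forms ω, ρ, ρ', σ := ρ − ρ' as defined: the following equalities of 4-forms hold on U: ω ∧ dσ = d(ω ∧ σ) = d(ω ∧ ρ) = Ω ∧ dρ. (These are the four equivalent descriptions of the first scalar invariant I¹_D = ∗(ω ∧ dσ).) -/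
noncomputable section

lemma diff_comp_eval {f : Vec → Vec} {x : Vec} (hf : DifferentiableAt ℝ f x) (k : Fin 4) :
    DifferentiableAt ℝ (fun y => f y k) x := differentiableAt_pi.mp hf k

lemma fderiv_comp_eval {f : Vec → Vec} {x : Vec} (hf : DifferentiableAt ℝ f x) (k : Fin 4) (u : Vec) :
    fderiv ℝ (fun y => f y k) x u = fderiv ℝ f x u k := by
  have h : HasFDerivAt (fun y => f y k)
      ((ContinuousLinearMap.proj k).comp (fderiv ℝ f x)) x :=
    (ContinuousLinearMap.proj (R := ℝ) (φ := fun _ : Fin 4 => ℝ) k).hasFDerivAt.comp x hf.hasFDerivAt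
  rw [h.fderiv]; rfl

lemma fd_add {F G : Vec → ℝ} {x : Vec} (hF : DifferentiableAt ℝ F x) (hG : DifferentiableAt ℝ G x) (u : Vec) :
    fderiv ℝ (fun y => F y + G y) x u = fderiv ℝ F x u + fderiv ℝ G x u := by
  rw [fderiv_fun_add hF hG]; rfl

lemma fd_sub {F G : Vec → ℝ} {x : Vec} (hF : DifferentiableAt ℝ F x) (hG : DifferentiableAt ℝ G x) (u : Vec) :
    fderiv ℝ (fun y => F y - G y) x u = fderiv ℝ F x u - fderiv ℝ G x u := by
  rw [fderiv_fun_sub hF hG]; rfl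

lemma fd_mul {F G : Vec → ℝ} {x : Vec} (hF : DifferentiableAt ℝ F x) (hG : DifferentiableAt ℝ G x) (u : Vec) :
    fderiv ℝ (fun y => F y * G y) x u = fderiv ℝ F x u * G x + F x * fderiv ℝ G x u := by
  rw [fderiv_fun_mul hF hG]; simp [ContinuousLinearMap.add_apply, ContinuousLinearMap.smul_apply]; ring

lemma fd_cmul {F : Vec → ℝ} {x : Vec} (hF : DifferentiableAt ℝ F x) (c : ℝ) (u : Vec) :
    fderiv ℝ (fun y => c * F y) x u = c * fderiv ℝ F x u := by
  rw [fderiv_const_mul hF c]; rfl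

lemma fd_mulc {F : Vec → ℝ} {x : Vec} (hF : DifferentiableAt ℝ F x) (c : ℝ) (u : Vec) :
    fderiv ℝ (fun y => F y * c) x u = fderiv ℝ F x u * c := by
  rw [fderiv_mul_const hF c]; simp [mul_comm]

lemma diff_omega_right {f : Vec → Vec} {x : Vec} (hf : DifferentiableAt ℝ f x) (v : Vec) :
    DifferentiableAt ℝ (fun y => Omega v (f y)) x := by
  simp only [Omega]
  exact ((((diff_comp_eval hf 0).const_mul _).sub ((diff_comp_eval hf 1).const_mul _)).add
    ((diff_comp_eval hf 2).const_mul _)).sub ((diff_comp_eval hf 3).const_mul _)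

lemma diff_omega_left {f : Vec → Vec} {x : Vec} (hf : DifferentiableAt ℝ f x) (v : Vec) :
    DifferentiableAt ℝ (fun y => Omega (f y) v) x := by
  simp only [Omega]
  exact ((((diff_comp_eval hf 1).mul_const _).sub ((diff_comp_eval hf 0).mul_const _)).add
    ((diff_comp_eval hf 3).mul_const _)).sub ((diff_comp_eval hf 2).mul_const _)

lemma diff_omega₂ {f g : Vec → Vec} {x : Vec} (hf : DifferentiableAt ℝ f x)
    (hg : DifferentiableAt ℝ g x) :
    DifferentiableAt ℝ (fun y => Omega (f y) (g y)) x := by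
  simp only [Omega]
  exact ((((diff_comp_eval hf 1).mul (diff_comp_eval hg 0)).sub
    ((diff_comp_eval hf 0).mul (diff_comp_eval hg 1))).add
    ((diff_comp_eval hf 3).mul (diff_comp_eval hg 2))).sub
    ((diff_comp_eval hf 2).mul (diff_comp_eval hg 3))

lemma fderiv_omega_right {f : Vec → Vec} {x : Vec} (hf : DifferentiableAt ℝ f x) (v u : Vec) :
    fderiv ℝ (fun y => Omega v (f y)) x u = Omega v (fderiv ℝ f x u) := by
  have h0 := diff_comp_eval hf 0; have h1 := diff_comp_eval hf 1
  have h2 := diff_comp_eval hf 2; have h3 := diff_comp_eval hf 3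
  simp only [Omega]
  rw [fd_sub (((h0.const_mul _).fun_sub (h1.const_mul _)).fun_add (h2.const_mul _)) (h3.const_mul _),
    fd_add ((h0.const_mul _).fun_sub (h1.const_mul _)) (h2.const_mul _),
    fd_sub (h0.const_mul _) (h1.const_mul _),
    fd_cmul h0, fd_cmul h1, fd_cmul h2, fd_cmul h3,
    fderiv_comp_eval hf 0, fderiv_comp_eval hf 1, fderiv_comp_eval hf 2, fderiv_comp_eval hf 3]

lemma fderiv_omega_left {f : Vec → Vec} {x : Vec} (hf : DifferentiableAt ℝ f x) (v u : Vec) :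
    fderiv ℝ (fun y => Omega (f y) v) x u = Omega (fderiv ℝ f x u) v := by
  have h0 := diff_comp_eval hf 0; have h1 := diff_comp_eval hf 1
  have h2 := diff_comp_eval hf 2; have h3 := diff_comp_eval hf 3
  simp only [Omega]
  rw [fd_sub (((h1.mul_const _).fun_sub (h0.mul_const _)).fun_add (h3.mul_const _)) (h2.mul_const _),
    fd_add ((h1.mul_const _).fun_sub (h0.mul_const _)) (h3.mul_const _),
    fd_sub (h1.mul_const _) (h0.mul_const _),
    fd_mulc h1, fd_mulc h0, fd_mulc h2, fd_mulc h3,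
    fderiv_comp_eval hf 0, fderiv_comp_eval hf 1, fderiv_comp_eval hf 2, fderiv_comp_eval hf 3]

lemma fderiv_omega₂ {f g : Vec → Vec} {x : Vec} (hf : DifferentiableAt ℝ f x)
    (hg : DifferentiableAt ℝ g x) (u : Vec) :
    fderiv ℝ (fun y => Omega (f y) (g y)) x u
      = Omega (fderiv ℝ f x u) (g x) + Omega (f x) (fderiv ℝ g x u) := by
  have hf0 := diff_comp_eval hf 0; have hf1 := diff_comp_eval hf 1
  have hf2 := diff_comp_eval hf 2; have hf3 := diff_comp_eval hf 3
  have hg0 := diff_comp_eval hg 0; have hg1 := diff_comp_eval hg 1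
  have hg2 := diff_comp_eval hg 2; have hg3 := diff_comp_eval hg 3
  simp only [Omega]
  rw [fd_sub (((hf1.fun_mul hg0).fun_sub (hf0.fun_mul hg1)).fun_add (hf3.fun_mul hg2)) (hf2.fun_mul hg3),
    fd_add ((hf1.fun_mul hg0).fun_sub (hf0.fun_mul hg1)) (hf3.fun_mul hg2),
    fd_sub (hf1.fun_mul hg0) (hf0.fun_mul hg1),
    fd_mul hf1 hg0, fd_mul hf0 hg1, fd_mul hf3 hg2, fd_mul hf2 hg3,
    fderiv_comp_eval hf 0, fderiv_comp_eval hf 1, fderiv_comp_eval hf 2, fderiv_comp_eval hf 3,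
    fderiv_comp_eval hg 0, fderiv_comp_eval hg 1, fderiv_comp_eval hg 2, fderiv_comp_eval hg 3]
  ring
lemma dec_lemma (e1 e2 e3 e4 : Vec)
    (h12 : Omega e1 e2 = 1) (h34 : Omega e3 e4 = 1)
    (h13 : Omega e1 e3 = 0) (h14 : Omega e1 e4 = 0)
    (h23 : Omega e2 e3 = 0) (h24 : Omega e2 e4 = 0) :
    ∀ u : Vec, u = Omega u e2 • e1 + Omega e1 u • e2 + Omega u e4 • e3 + Omega e3 u • e4 := by
  classical
  set A : Matrix (Fin 4) (Fin 4) ℝ := Matrix.of fun i j => (![e1, e2, e3, e4] j) i with hA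
  set B : Matrix (Fin 4) (Fin 4) ℝ := Matrix.of
    ![![-(e2 1), e2 0, -(e2 3), e2 2],
      ![e1 1, -(e1 0), e1 3, -(e1 2)],
      ![-(e4 1), e4 0, -(e4 3), e4 2],
      ![e3 1, -(e3 0), e3 3, -(e3 2)]] with hB
  simp only [Omega] at h12 h34 h13 h14 h23 h24
  have hBA : B * A = 1 := by
    ext i j
    fin_cases i <;> fin_cases j <;>
      simp [hA, hB, Matrix.mul_apply, Fin.sum_univ_four, Matrix.one_apply] <;>
      first
        | ring1
        | linear_combination h12 | linear_combination -h12
        | linear_combination h34 | linear_combination -h34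
        | linear_combination h13 | linear_combination -h13
        | linear_combination h14 | linear_combination -h14
        | linear_combination h23 | linear_combination -h23
        | linear_combination h24 | linear_combination -h24
  have hAB : A * B = 1 := mul_eq_one_comm.mpr hBA
  intro u
  funext k
  have hk : ∀ l, (∑ i, A k i * B i l) = if k = l then (1:ℝ) else 0 := by
    intro l
    have h := congrFun (congrFun hAB k) l
    rwa [Matrix.mul_apply, Matrix.one_apply] at h
  have h0 := hk 0; have h1 := hk 1; have h2 := hk 2; have h3 := hk 3
  rw [Fin.sum_univ_four] at h0 h1 h2 h3
  simp only [hA, hB, Matrix.of_apply, Matrix.cons_val', Matrix.cons_val_zero, Matrix.cons_val_one,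
    Matrix.head_cons, Matrix.empty_val', Matrix.cons_val_fin_one, Matrix.head_fin_const,
    Matrix.cons_val_two, Matrix.tail_cons, Matrix.cons_val_three] at h0 h1 h2 h3
  have hsum : (if k = 0 then (1:ℝ) else 0) * u 0 + (if k = 1 then (1:ℝ) else 0) * u 1
      + (if k = 2 then (1:ℝ) else 0) * u 2 + (if k = 3 then (1:ℝ) else 0) * u 3 = u k := by
    fin_cases k <;> simp
  simp only [Pi.add_apply, Pi.smul_apply, smul_eq_mul, Omega]
  first
    | linear_combination u 0 * h0 + u 1 * h1 + u 2 * h2 + u 3 * h3 + hsum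
    | linear_combination -(u 0 * h0) - u 1 * h1 - u 2 * h2 - u 3 * h3 + hsum
    | linear_combination u 0 * h0 + u 1 * h1 + u 2 * h2 + u 3 * h3 - hsum
    | linear_combination -(u 0 * h0) - u 1 * h1 - u 2 * h2 - u 3 * h3 - hsum
lemma alt3_vanish (H : Vec → Vec → Vec → ℝ) (E : Fin 4 → Vec) (C1 C2 C3 C4 : Vec → ℝ)
    (hdec : ∀ u : Vec, u = C1 u • E 0 + C2 u • E 1 + C3 u • E 2 + C4 u • E 3)
    (hadd1 : ∀ u v b c, H (u + v) b c = H u b c + H v b c)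
    (hsmul1 : ∀ (r : ℝ) u b c, H (r • u) b c = r * H u b c)
    (hadd2 : ∀ a u v c, H a (u + v) c = H a u c + H a v c)
    (hsmul2 : ∀ (r : ℝ) a u c, H a (r • u) c = r * H a u c)
    (hadd3 : ∀ a b u v, H a b (u + v) = H a b u + H a b v)
    (hsmul3 : ∀ (r : ℝ) a b u, H a b (r • u) = r * H a b u)
    (swap12 : ∀ u v w, H u v w = - H v u w)
    (swap23 : ∀ u v w, H u v w = - H u w v)
    (h012 : H (E 0) (E 1) (E 2) = 0) (h013 : H (E 0) (E 1) (E 3) = 0)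
    (h023 : H (E 0) (E 2) (E 3) = 0) (h123 : H (E 1) (E 2) (E 3) = 0) :
    ∀ u v w, H u v w = 0 := by
  have hrep1 : ∀ u w, H u u w = 0 := fun u w => by have := swap12 u u w; linarith
  have hrep2 : ∀ u v, H u v v = 0 := fun u v => by have := swap23 u v v; linarith
  have base : ∀ i j k : Fin 4, H (E i) (E j) (E k) = 0 := by
    intro i j k
    fin_cases i <;> fin_cases j <;> fin_cases k <;>
      first
        | exact hrep1 _ _ | exact hrep2 _ _
        | exact h012 | exact h013 | exact h023 | exact h123
        | (rw [swap12, neg_eq_zero]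
           first
            | exact hrep1 _ _ | exact hrep2 _ _
            | exact h012 | exact h013 | exact h023 | exact h123)
        | (rw [swap23, neg_eq_zero]
           first
            | exact hrep1 _ _ | exact hrep2 _ _
            | exact h012 | exact h013 | exact h023 | exact h123)
        | (rw [swap12, neg_eq_zero, swap23, neg_eq_zero]
           first
            | exact hrep1 _ _ | exact hrep2 _ _
            | exact h012 | exact h013 | exact h023 | exact h123)
        | (rw [swap23, neg_eq_zero, swap12, neg_eq_zero]
           first
            | exact hrep1 _ _ | exact hrep2 _ _
            | exact h012 | exact h013 | exact h023 | exact h123)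
        | (rw [swap12, neg_eq_zero, swap23, neg_eq_zero, swap12, neg_eq_zero]
           first
            | exact hrep1 _ _ | exact hrep2 _ _
            | exact h012 | exact h013 | exact h023 | exact h123)
  have step1 : ∀ (i j : Fin 4) (w : Vec), H (E i) (E j) w = 0 := by
    intro i j w
    conv_lhs => rw [hdec w]
    simp only [hadd3, hsmul3, base, mul_zero, add_zero, zero_add]
  have step2 : ∀ (i : Fin 4) (v w : Vec), H (E i) v w = 0 := by
    intro i v w
    conv_lhs => rw [hdec v]
    simp only [hadd2, hsmul2, step1, mul_zero, add_zero, zero_add]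
  intro u v w
  conv_lhs => rw [hdec u]
  simp only [hadd1, hsmul1, step2, mul_zero, add_zero, zero_add]
def Gf (X Y : Vec → Vec) : Vec → Vec → Vec → ℝ :=
  fun y v w => Omega v (Y y) * Omega (X y) w - Omega w (Y y) * Omega (X y) v

def DGf (X Y : Vec → Vec) (x : Vec) : Vec → Vec → Vec → ℝ :=
  fun u v w => Omega v (fderiv ℝ Y x u) * Omega (X x) w + Omega v (Y x) * Omega (fderiv ℝ X x u) w
    - Omega w (fderiv ℝ Y x u) * Omega (X x) v - Omega w (Y x) * Omega (fderiv ℝ X x u) v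


set_option maxHeartbeats 2000000

/-- the four equivalent descriptions of the first scalar invariant:
`ω ∧ dσ = d(ω ∧ σ) = d(ω ∧ ρ) = Ω ∧ dρ` as 4-forms on `U`. -/
theorem stmt_9
    (U : Set Vec) (hU : IsOpen U)
    (X Y X' Y' : Vec → Vec) (P : Vec → Vec →L[ℝ] Vec)
    (hX : ContDiffOn ℝ (⊤ : ℕ∞) X U) (hY : ContDiffOn ℝ (⊤ : ℕ∞) Y U)
    (hX' : ContDiffOn ℝ (⊤ : ℕ∞) X' U) (hY' : ContDiffOn ℝ (⊤ : ℕ∞) Y' U)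
    (hP : ContDiffOn ℝ (⊤ : ℕ∞) P U)
    (hXY : ∀ x ∈ U, Omega (X x) (Y x) = 1)
    (hX'Y' : ∀ x ∈ U, Omega (X' x) (Y' x) = 1)
    (horth : ∀ x ∈ U, Omega (X x) (X' x) = 0 ∧ Omega (X x) (Y' x) = 0 ∧
      Omega (Y x) (X' x) = 0 ∧ Omega (Y x) (Y' x) = 0)
    (hProj : ∀ x ∈ U, P x (X x) = X x ∧ P x (Y x) = Y x ∧
      P x (X' x) = 0 ∧ P x (Y' x) = 0)
    (Z Z' : Vec → Vec)
    (hZ : Z = fun x => vbracket X Y x - P x (vbracket X Y x))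
    (hZ' : Z' = fun x => P x (vbracket X' Y' x))
    (ρ ρ' σ : Vec → Vec → ℝ)
    (hρ : ρ = fun x v => Omega (Z x) v)
    (hρ' : ρ' = fun x v => Omega (Z' x) v)
    (hσ : σ = fun x v => ρ x v - ρ' x v)
    (ω : Vec → Vec → Vec → ℝ)
    (hω : ω = fun x u v => (Omega (P x u) v + Omega u (P x v)) / 2)
    :
    ∀ x ∈ U, ∀ a b c d : Vec,
      w22 (ω x) (d1 σ x) a b c d = d3 (fun y => w21 (ω y) (σ y)) x a b c d ∧
      d3 (fun y => w21 (ω y) (σ y)) x a b c d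
        = d3 (fun y => w21 (ω y) (ρ y)) x a b c d ∧
      d3 (fun y => w21 (ω y) (ρ y)) x a b c d = w22 Omega (d1 ρ x) a b c d := by
  intro x hx a b c d
  have hanti : ∀ v w : Vec, Omega v w = - Omega w v := by
    intro v w; simp only [Omega]; ring
  have hdec : ∀ y ∈ U, ∀ u : Vec, u = Omega u (Y y) • X y + Omega (X y) u • Y y
      + Omega u (Y' y) • X' y + Omega (X' y) u • Y' y := by
    intro y hy
    exact dec_lemma (X y) (Y y) (X' y) (Y' y) (hXY y hy) (hX'Y' y hy)
      (horth y hy).1 (horth y hy).2.1 (horth y hy).2.2.1 (horth y hy).2.2.2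
  have hPform : ∀ y ∈ U, ∀ u : Vec, P y u = Omega u (Y y) • X y + Omega (X y) u • Y y := by
    intro y hy u
    conv_lhs => rw [hdec y hy u]
    rw [map_add, map_add, map_add, map_smul, map_smul, map_smul, map_smul,
      (hProj y hy).1, (hProj y hy).2.1, (hProj y hy).2.2.1, (hProj y hy).2.2.2]
    simp
  have hωform : ∀ y ∈ U, ∀ u v : Vec, ω y u v
      = Omega u (Y y) * Omega (X y) v - Omega v (Y y) * Omega (X y) u := by
    intro y hy u v
    rw [hω]
    simp only
    rw [hPform y hy u, hPform y hy v]
    simp only [Omega, Pi.add_apply, Pi.smul_apply, smul_eq_mul]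
    ring
  have hOmform : ∀ y ∈ U, ∀ u v : Vec, Omega u v
      = Omega u (Y y) * Omega (X y) v - Omega v (Y y) * Omega (X y) u
        + Omega u (Y' y) * Omega (X' y) v - Omega v (Y' y) * Omega (X' y) u := by
    intro y hy u v
    conv_lhs => rw [hdec y hy u]
    simp only [Omega, Pi.add_apply, Pi.smul_apply, smul_eq_mul]
    ring
  have hρform : ∀ y ∈ U, ∀ u : Vec, ρ y u
      = Omega (vbracket X Y y) (Y' y) * Omega (X' y) u
        - Omega (X' y) (vbracket X Y y) * Omega u (Y' y) := by
    intro y hy u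
    rw [hρ]; simp only
    rw [hZ]; simp only
    rw [hPform y hy (vbracket X Y y)]
    have h := hOmform y hy (vbracket X Y y) u
    simp only [Omega, Pi.sub_apply, Pi.add_apply, Pi.smul_apply, smul_eq_mul] at h ⊢
    linear_combination h
  have hρ'form : ∀ y ∈ U, ∀ u : Vec, ρ' y u
      = Omega (vbracket X' Y' y) (Y y) * Omega (X y) u
        - Omega (X y) (vbracket X' Y' y) * Omega u (Y y) := by
    intro y hy u
    rw [hρ']; simp only
    rw [hZ']; simp only
    rw [hPform y hy (vbracket X' Y' y)]
    simp only [Omega, Pi.add_apply, Pi.smul_apply, smul_eq_mul]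
    ring
  
  have hI1 : ∀ y ∈ U, ∀ u v w : Vec, w21 (ω y) (σ y) u v w = w21 (ω y) (ρ y) u v w := by
    intro y hy u v w
    simp only [w21, hσ]
    rw [hωform y hy u v, hωform y hy u w, hωform y hy v w,
      hρ'form y hy u, hρ'form y hy v, hρ'form y hy w]
    ring
  have hI2 : ∀ y ∈ U, ∀ u v w : Vec, w21 Omega (ρ y) u v w = w21 (ω y) (ρ y) u v w := by
    intro y hy u v w
    simp only [w21]
    rw [hωform y hy u v, hωform y hy u w, hωform y hy v w,
      hρform y hy u, hρform y hy v, hρform y hy w,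
      hOmform y hy u v, hOmform y hy u w, hOmform y hy v w]
    ring
  have hsadd : ∀ u v : Vec, σ x (u + v) = σ x u + σ x v := by
    intro u v
    simp only [hσ, hρ, hρ', Omega, Pi.add_apply]
    ring
  have hssmul : ∀ (r : ℝ) (u : Vec), σ x (r • u) = r * σ x u := by
    intro r u
    simp only [hσ, hρ, hρ', Omega, Pi.smul_apply, smul_eq_mul]
    ring
  obtain ⟨g13, g14, g23, g24⟩ := horth x hx
  have g12 := hXY x hx
  have g34 := hX'Y' x hx
  have memU : U ∈ nhds x := hU.mem_nhds hx
  have hXd : DifferentiableAt ℝ X x := (hX.contDiffAt memU).differentiableAt (by simp)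
  have hYd : DifferentiableAt ℝ Y x := (hY.contDiffAt memU).differentiableAt (by simp)
  have hX'd : DifferentiableAt ℝ X' x := (hX'.contDiffAt memU).differentiableAt (by simp)
  have hY'd : DifferentiableAt ℝ Y' x := (hY'.contDiffAt memU).differentiableAt (by simp)
  have hPd : DifferentiableAt ℝ P x := (hP.contDiffAt memU).differentiableAt (by simp)
  have hDX : DifferentiableAt ℝ (fun y => fderiv ℝ X y) x :=
    (((hX.fderiv_of_isOpen hU (m := (⊤ : ℕ∞)) (by exact_mod_cast le_top)).contDiffAt memU).differentiableAt (by simp))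
  have hDY : DifferentiableAt ℝ (fun y => fderiv ℝ Y y) x :=
    (((hY.fderiv_of_isOpen hU (m := (⊤ : ℕ∞)) (by exact_mod_cast le_top)).contDiffAt memU).differentiableAt (by simp))
  have hDX' : DifferentiableAt ℝ (fun y => fderiv ℝ X' y) x :=
    (((hX'.fderiv_of_isOpen hU (m := (⊤ : ℕ∞)) (by exact_mod_cast le_top)).contDiffAt memU).differentiableAt (by simp))
  have hDY' : DifferentiableAt ℝ (fun y => fderiv ℝ Y' y) x :=
    (((hY'.fderiv_of_isOpen hU (m := (⊤ : ℕ∞)) (by exact_mod_cast le_top)).contDiffAt memU).differentiableAt (by simp))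
  have hRgen : ∀ (f g : Vec → Vec) (c : ℝ), DifferentiableAt ℝ f x → DifferentiableAt ℝ g x →
      (∀ y ∈ U, Omega (f y) (g y) = c) → ∀ u : Vec,
      Omega (fderiv ℝ f x u) (g x) + Omega (f x) (fderiv ℝ g x u) = 0 := by
    intro f g c hf hg hval u
    have hev : (fun y => Omega (f y) (g y)) =ᶠ[nhds x] (fun _ => c) :=
      Filter.eventuallyEq_of_mem memU hval
    have h0 : fderiv ℝ (fun y => Omega (f y) (g y)) x = 0 := by
      rw [hev.fderiv_eq, fderiv_const_apply]
    have h := fderiv_omega₂ hf hg u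
    rw [h0] at h
    simpa using h.symm
  have R1 := hRgen X Y 1 hXd hYd hXY
  have R2 := hRgen X' Y' 1 hX'd hY'd hX'Y'
  have R3 := hRgen X X' 0 hXd hX'd (fun y hy => (horth y hy).1)
  have R4 := hRgen X Y' 0 hXd hY'd (fun y hy => (horth y hy).2.1)
  have R5 := hRgen Y X' 0 hYd hX'd (fun y hy => (horth y hy).2.2.1)
  have R6 := hRgen Y Y' 0 hYd hY'd (fun y hy => (horth y hy).2.2.2)
  have hsx : ∀ u : Vec, σ x u =
      Omega (fderiv ℝ Y x (X x)) u - Omega (fderiv ℝ X x (Y x)) u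
      - (Omega (fderiv ℝ Y x (X x)) (Y x) - Omega (fderiv ℝ X x (Y x)) (Y x)
         + Omega (fderiv ℝ Y' x (X' x)) (Y x) - Omega (fderiv ℝ X' x (Y' x)) (Y x)) * Omega (X x) u
      - (Omega (X x) (fderiv ℝ Y x (X x)) - Omega (X x) (fderiv ℝ X x (Y x))
         + Omega (X x) (fderiv ℝ Y' x (X' x)) - Omega (X x) (fderiv ℝ X' x (Y' x))) * Omega (Y x) u := by
    intro u
    simp only [hσ, hρ, hρ', hZ, hZ']
    rw [hPform x hx (vbracket X Y x), hPform x hx (vbracket X' Y' x)]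
    simp only [Omega, vbracket, Pi.sub_apply, Pi.add_apply, Pi.smul_apply, smul_eq_mul]
    ring
  
  -- Gram values at x, all orders
  have g11 : Omega (X x) (X x) = 0 := by simp only [Omega]; ring
  have g22 : Omega (Y x) (Y x) = 0 := by simp only [Omega]; ring
  have g33 : Omega (X' x) (X' x) = 0 := by simp only [Omega]; ring
  have g44 : Omega (Y' x) (Y' x) = 0 := by simp only [Omega]; ring
  have g21 : Omega (Y x) (X x) = -1 := by rw [hanti, g12]
  have g43 : Omega (Y' x) (X' x) = -1 := by rw [hanti, g34]
  have g31 : Omega (X' x) (X x) = 0 := by rw [hanti, g13]; ring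
  have g41 : Omega (Y' x) (X x) = 0 := by rw [hanti, g14]; ring
  have g32 : Omega (X' x) (Y x) = 0 := by rw [hanti, g23]; ring
  have g42 : Omega (Y' x) (Y x) = 0 := by rw [hanti, g24]; ring
  -- differentiability
  have hVd : DifferentiableAt ℝ (vbracket X Y) x := by
    unfold vbracket
    exact (hDY.clm_apply hXd).sub (hDX.clm_apply hYd)
  have hV'd : DifferentiableAt ℝ (vbracket X' Y') x := by
    unfold vbracket
    exact (hDY'.clm_apply hX'd).sub (hDX'.clm_apply hY'd)
  have hZd : DifferentiableAt ℝ Z x := by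
    rw [hZ]; exact hVd.sub (hPd.clm_apply hVd)
  have hZ'd : DifferentiableAt ℝ Z' x := by
    rw [hZ']; exact hPd.clm_apply hV'd
  have hρd : ∀ v : Vec, DifferentiableAt ℝ (fun y => ρ y v) x := by
    intro v; simp only [hρ]; exact diff_omega_left hZd v
  have hρ'd : ∀ v : Vec, DifferentiableAt ℝ (fun y => ρ' y v) x := by
    intro v; simp only [hρ']; exact diff_omega_left hZ'd v
  have hσd : ∀ v : Vec, DifferentiableAt ℝ (fun y => σ y v) x := by
    intro v; simp only [hσ]; exact (hρd v).sub (hρ'd v)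
  have hGd : ∀ v w : Vec, DifferentiableAt ℝ (fun y => Gf X Y y v w) x := by
    intro v w; simp only [Gf]
    exact ((diff_omega_right hYd v).mul (diff_omega_left hXd w)).sub
      ((diff_omega_right hYd w).mul (diff_omega_left hXd v))
  have hDgf : ∀ u v w : Vec, fderiv ℝ (fun y => Gf X Y y v w) x u = DGf X Y x u v w := by
    intro u v w; simp only [Gf, DGf]
    rw [fd_sub ((diff_omega_right hYd v).fun_mul (diff_omega_left hXd w))
        ((diff_omega_right hYd w).fun_mul (diff_omega_left hXd v)),
      fd_mul (diff_omega_right hYd v) (diff_omega_left hXd w),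
      fd_mul (diff_omega_right hYd w) (diff_omega_left hXd v),
      fderiv_omega_right hYd v u, fderiv_omega_right hYd w u,
      fderiv_omega_left hXd w u, fderiv_omega_left hXd v u]
    ring
  
  have hb012 : DGf X Y x (X x) (Y x) (X' x) - DGf X Y x (Y x) (X x) (X' x)
      + DGf X Y x (X' x) (X x) (Y x)
      - (Omega (X x) (Y x) * σ x (X' x) - Omega (X x) (X' x) * σ x (Y x)
        + Omega (Y x) (X' x) * σ x (X x)) = 0 := by
    simp only [DGf, hsx]
    simp only [g11, g22, g33, g44, g12, g21, g13, g31, g14, g41, g23, g32, g24, g42, g34, g43]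
    first
      | linear_combination R1 (X' x) - hanti (X' x) (fderiv ℝ Y x (X x))
      | linear_combination - R1 (X' x) + hanti (X' x) (fderiv ℝ Y x (X x))
  have hb013 : DGf X Y x (X x) (Y x) (Y' x) - DGf X Y x (Y x) (X x) (Y' x)
      + DGf X Y x (Y' x) (X x) (Y x)
      - (Omega (X x) (Y x) * σ x (Y' x) - Omega (X x) (Y' x) * σ x (Y x)
        + Omega (Y x) (Y' x) * σ x (X x)) = 0 := by
    simp only [DGf, hsx]
    simp only [g11, g22, g33, g44, g12, g21, g13, g31, g14, g41, g23, g32, g24, g42, g34, g43]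
    first
      | linear_combination R1 (Y' x) - hanti (Y' x) (fderiv ℝ Y x (X x))
      | linear_combination - R1 (Y' x) + hanti (Y' x) (fderiv ℝ Y x (X x))
  have hb023 : DGf X Y x (X x) (X' x) (Y' x) - DGf X Y x (X' x) (X x) (Y' x)
      + DGf X Y x (Y' x) (X x) (X' x)
      - (Omega (X x) (X' x) * σ x (Y' x) - Omega (X x) (Y' x) * σ x (X' x)
        + Omega (X' x) (Y' x) * σ x (X x)) = 0 := by
    simp only [DGf, hsx]
    simp only [g11, g22, g33, g44, g12, g21, g13, g31, g14, g41, g23, g32, g24, g42, g34, g43]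
    first
      | linear_combination (-1 : ℝ) * R4 (X' x) + R3 (Y' x)
          - hanti (fderiv ℝ Y x (X x)) (X x) + hanti (fderiv ℝ X x (Y x)) (X x)
      | linear_combination R4 (X' x) - R3 (Y' x)
          + hanti (fderiv ℝ Y x (X x)) (X x) - hanti (fderiv ℝ X x (Y x)) (X x)
  have hb123 : DGf X Y x (Y x) (X' x) (Y' x) - DGf X Y x (X' x) (Y x) (Y' x)
      + DGf X Y x (Y' x) (Y x) (X' x)
      - (Omega (Y x) (X' x) * σ x (Y' x) - Omega (Y x) (Y' x) * σ x (X' x)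
        + Omega (X' x) (Y' x) * σ x (Y x)) = 0 := by
    simp only [DGf, hsx]
    simp only [g11, g22, g33, g44, g12, g21, g13, g31, g14, g41, g23, g32, g24, g42, g34, g43]
    first
      | linear_combination hanti (Y' x) (fderiv ℝ Y x (X' x)) - hanti (X' x) (fderiv ℝ Y x (Y' x))
          + hanti (fderiv ℝ Y' x (X' x)) (Y x) - hanti (fderiv ℝ X' x (Y' x)) (Y x)
          - R6 (X' x) + R5 (Y' x)
      | linear_combination - hanti (Y' x) (fderiv ℝ Y x (X' x)) + hanti (X' x) (fderiv ℝ Y x (Y' x))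
          - hanti (fderiv ℝ Y' x (X' x)) (Y x) + hanti (fderiv ℝ X' x (Y' x)) (Y x)
          + R6 (X' x) - R5 (Y' x)
  
  have KEY : ∀ u v w : Vec, DGf X Y x u v w - DGf X Y x v u w + DGf X Y x w u v
      = Omega u v * σ x w - Omega u w * σ x v + Omega v w * σ x u := by
    have hvan := alt3_vanish
      (fun u v w => DGf X Y x u v w - DGf X Y x v u w + DGf X Y x w u v
        - (Omega u v * σ x w - Omega u w * σ x v + Omega v w * σ x u))
      ![X x, Y x, X' x, Y' x]
      (fun u => Omega u (Y x)) (fun u => Omega (X x) u)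
      (fun u => Omega u (Y' x)) (fun u => Omega (X' x) u)
      (by intro u
          simp only [Matrix.cons_val_zero, Matrix.cons_val_one, Matrix.head_cons,
            Matrix.cons_val_two, Matrix.tail_cons, Matrix.cons_val_three]
          exact hdec x hx u)
      (by intro u v b c
          simp only [DGf, map_add, hsadd, Omega, Pi.add_apply]; ring)
      (by intro r u b c
          simp only [DGf, map_smul, hssmul, Omega, Pi.smul_apply, smul_eq_mul]; ring)
      (by intro a u v c
          simp only [DGf, map_add, hsadd, Omega, Pi.add_apply]; ring)
      (by intro r a u c
          simp only [DGf, map_smul, hssmul, Omega, Pi.smul_apply, smul_eq_mul]; ring)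
      (by intro a b u v
          simp only [DGf, map_add, hsadd, Omega, Pi.add_apply]; ring)
      (by intro r a b u
          simp only [DGf, map_smul, hssmul, Omega, Pi.smul_apply, smul_eq_mul]; ring)
      (by intro u v w; simp only [DGf, Omega]; ring)
      (by intro u v w; simp only [DGf, Omega]; ring)
      hb012 hb013 hb023 hb123
    intro u v w
    exact sub_eq_zero.mp (hvan u v w)
  
  -- Equality 2
  have hfd2 : ∀ v w z : Vec, fderiv ℝ (fun y => w21 (ω y) (σ y) v w z) x
      = fderiv ℝ (fun y => w21 (ω y) (ρ y) v w z) x := by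
    intro v w z
    apply Filter.EventuallyEq.fderiv_eq
    exact Filter.eventuallyEq_of_mem memU (fun y hy => hI1 y hy v w z)
  have eq2 : d3 (fun y => w21 (ω y) (σ y)) x a b c d = d3 (fun y => w21 (ω y) (ρ y)) x a b c d := by
    simp only [d3]
    rw [hfd2 b c d, hfd2 a c d, hfd2 a b d, hfd2 a b c]
  -- Equality 3
  have hfd3 : ∀ v w z : Vec, fderiv ℝ (fun y => w21 (ω y) (ρ y) v w z) x
      = fderiv ℝ (fun y => Omega v w * ρ y z - Omega v z * ρ y w + Omega w z * ρ y v) x := by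
    intro v w z
    apply Filter.EventuallyEq.fderiv_eq
    apply Filter.eventuallyEq_of_mem memU
    intro y hy
    have h := (hI2 y hy v w z).symm
    simp only [w21] at h ⊢
    exact h
  have hfdρ : ∀ u v w z : Vec,
      fderiv ℝ (fun y => Omega v w * ρ y z - Omega v z * ρ y w + Omega w z * ρ y v) x u
      = Omega v w * fderiv ℝ (fun y => ρ y z) x u - Omega v z * fderiv ℝ (fun y => ρ y w) x u
        + Omega w z * fderiv ℝ (fun y => ρ y v) x u := by
    intro u v w z
    rw [fd_add (((hρd z).const_mul _).fun_sub ((hρd w).const_mul _)) ((hρd v).const_mul _),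
      fd_sub ((hρd z).const_mul _) ((hρd w).const_mul _),
      fd_cmul (hρd z) _, fd_cmul (hρd w) _, fd_cmul (hρd v) _]
  have eq3 : d3 (fun y => w21 (ω y) (ρ y)) x a b c d = w22 Omega (d1 ρ x) a b c d := by
    simp only [d3]
    rw [hfd3 b c d, hfd3 a c d, hfd3 a b d, hfd3 a b c,
      hfdρ a b c d, hfdρ b a c d, hfdρ c a b d, hfdρ d a b c]
    simp only [w22, d1]
    ring
  -- Equality 1
  have hfd1 : ∀ v w z : Vec, fderiv ℝ (fun y => w21 (ω y) (σ y) v w z) x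
      = fderiv ℝ (fun y => Gf X Y y v w * σ y z - Gf X Y y v z * σ y w + Gf X Y y w z * σ y v) x := by
    intro v w z
    apply Filter.EventuallyEq.fderiv_eq
    apply Filter.eventuallyEq_of_mem memU
    intro y hy
    simp only [w21, Gf]
    rw [hωform y hy v w, hωform y hy v z, hωform y hy w z]
  have hBB : ∀ u v w z : Vec,
      fderiv ℝ (fun y => Gf X Y y v w * σ y z - Gf X Y y v z * σ y w + Gf X Y y w z * σ y v) x u
      = DGf X Y x u v w * σ x z + Gf X Y x v w * fderiv ℝ (fun y => σ y z) x u
        - DGf X Y x u v z * σ x w - Gf X Y x v z * fderiv ℝ (fun y => σ y w) x u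
        + DGf X Y x u w z * σ x v + Gf X Y x w z * fderiv ℝ (fun y => σ y v) x u := by
    intro u v w z
    rw [fd_add (((hGd v w).fun_mul (hσd z)).fun_sub ((hGd v z).fun_mul (hσd w))) ((hGd w z).fun_mul (hσd v)),
      fd_sub ((hGd v w).fun_mul (hσd z)) ((hGd v z).fun_mul (hσd w)),
      fd_mul (hGd v w) (hσd z), fd_mul (hGd v z) (hσd w), fd_mul (hGd w z) (hσd v),
      hDgf u v w, hDgf u v z, hDgf u w z]
    ring
  have eq1 : w22 (ω x) (d1 σ x) a b c d = d3 (fun y => w21 (ω y) (σ y)) x a b c d := by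
    simp only [d3]
    rw [hfd1 b c d, hfd1 a c d, hfd1 a b d, hfd1 a b c,
      hBB a b c d, hBB b a c d, hBB c a b d, hBB d a b c]
    simp only [w22, d1, Gf]
    rw [hωform x hx a b, hωform x hx a c, hωform x hx a d,
      hωform x hx b c, hωform x hx b d, hωform x hx c d]
    first
      | linear_combination (σ x d) * KEY a b c - (σ x c) * KEY a b d
          + (σ x b) * KEY a c d - (σ x a) * KEY b c d
      | linear_combination (-(σ x d)) * KEY a b c + (σ x c) * KEY a b d
          - (σ x b) * KEY a c d + (σ x a) * KEY b c d
  exact ⟨eq1, eq2, eq3⟩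
end
end

section
/- Let U ⊆ ℝ⁴ be open with coordinates (x,p,y,q) and standard symplectic form Ω = dp∧dx + dq∧dy, let D be a smooth function on U, and let D be the 2-distribution spanned by the vector fields ∂_p and ∂_x − D∂_q. Then: (a) Ω(∂_p, ∂_x − D∂_q) = 1, so D is non-Lagrangian with normalized frame; (b) the Ω-orthogonal complement D' is spanned by ∂_q and ∂_y − D∂_p, with Ω(∂_q, ∂_y − D∂_p) = 1; (c) the invariant vector fields are Z = −D_p ∂_q and Z' = −D_q ∂_p, and the invariant 1-forms are ρ = −D_p dy and ρ' = −D_q dx (subscripts denoting partial derivatives). -/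
noncomputable section

/-- The `i`-th standard basis vector (so `e 0 = ∂_x`, `e 1 = ∂_p`, `e 2 = ∂_y`,
`e 3 = ∂_q`). -/
def e (i : Fin 4) : Vec := Pi.single i 1

/-- Partial derivative in the `i`-th coordinate direction. -/
def pd (i : Fin 4) (f : Vec → ℝ) : Vec → ℝ := fun z => fderiv ℝ f z (e i)

lemma fderiv_aux (D : Vec → ℝ) (z : Vec) (hDz : DifferentiableAt ℝ D z) (c b w : Vec) :
    fderiv ℝ (fun z => c - D z • b) z w = -(fderiv ℝ D z w) • b := by
  rw [fderiv_fun_sub (differentiableAt_const c) (hDz.smul_const b), fderiv_fun_const,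
    fderiv_smul_const hDz]
  simp [neg_smul]


/-- for the 2-distribution `D = ⟨∂_p, ∂_x − D∂_q⟩` on `U ⊆ ℝ⁴`
(encoding the Monge–Ampère equation `u_{xy} + D(x,y,u_x,u_y) = 0`):
(a) `Ω(∂_p, ∂_x − D∂_q) = 1`;
(b) the Ω-orthogonal complement `D'` is spanned by `∂_q` and `∂_y − D∂_p`, with
`Ω(∂_q, ∂_y − D∂_p) = 1`;
(c) the invariant vector fields are `Z = −D_p ∂_q`, `Z' = −D_q ∂_p` and the
invariant 1-forms are `ρ = −D_p dy`, `ρ' = −D_q dx`. -/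
theorem stmt_15 (U : Set Vec) (hU : IsOpen U)
    (D : Vec → ℝ) (hD : ContDiffOn ℝ (⊤ : ℕ∞) D U)
    (X Y X' Y' : Vec → Vec)
    (hX : X = fun _ => e 1) (hY : Y = fun z => e 0 - D z • e 3)
    (hX' : X' = fun _ => e 3) (hY' : Y' = fun z => e 2 - D z • e 1)
    (P : Vec → Vec →L[ℝ] Vec)
    (hProj : ∀ z ∈ U, P z (X z) = X z ∧ P z (Y z) = Y z ∧
      P z (X' z) = 0 ∧ P z (Y' z) = 0) :
    ∀ z ∈ U,
      -- (a)
      Omega (X z) (Y z) = 1 ∧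
      -- (b)
      Omega (X' z) (Y' z) = 1 ∧
      (∀ v : Vec, (Omega (X z) v = 0 ∧ Omega (Y z) v = 0) ↔
        v ∈ Submodule.span ℝ {X' z, Y' z}) ∧
      -- (c)
      vbracket X Y z - P z (vbracket X Y z) = (-(pd 1 D z)) • e 3 ∧
      P z (vbracket X' Y' z) = (-(pd 3 D z)) • e 1 ∧
      (∀ v : Vec, Omega (vbracket X Y z - P z (vbracket X Y z)) v
        = -(pd 1 D z) * v 2) ∧
      (∀ v : Vec, Omega (P z (vbracket X' Y' z)) v = -(pd 3 D z) * v 0) := by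
  intro z hz
  have hDz : DifferentiableAt ℝ D z :=
    ((hD.contDiffAt (hU.mem_nhds hz)).differentiableAt (by simp))
  obtain ⟨h1, h2, h3, h4⟩ := hProj z hz
  have hbXY : vbracket X Y z = (-(pd 1 D z)) • e 3 := by
    simp only [vbracket, hX, hY, fderiv_fun_const, pd]
    simp [fderiv_aux D z hDz (e 0) (e 3) (e 1)]
  have hbX'Y' : vbracket X' Y' z = (-(pd 3 D z)) • e 1 := by
    simp only [vbracket, hX', hY', fderiv_fun_const, pd]
    simp [fderiv_aux D z hDz (e 2) (e 1) (e 3)]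
  have hPXY : P z (vbracket X Y z) = 0 := by
    rw [hbXY]
    have : e 3 = X' z := by rw [hX']
    rw [this, map_smul, h3, smul_zero]
  have hPX'Y' : P z (vbracket X' Y' z) = (-(pd 3 D z)) • e 1 := by
    rw [hbX'Y']
    have : e 1 = X z := by rw [hX]
    rw [this, map_smul, h1, ← this]
  refine ⟨?_, ?_, ?_, ?_, hPX'Y', ?_, ?_⟩
  · simp [hX, hY, Omega, e, Pi.single_apply]
  · simp [hX', hY', Omega, e, Pi.single_apply]
  · intro v
    constructor
    · rintro ⟨hv1, hv2⟩
      simp [hX, Omega, e, Pi.single_apply] at hv1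
      simp [hY, Omega, e, Pi.single_apply] at hv2
      rw [Submodule.mem_span_pair]
      refine ⟨v 3, v 2, ?_⟩
      funext k
      fin_cases k <;>
        simp [hX', hY', e, Pi.single_apply, hv1] <;> linarith
    · intro hv
      rw [Submodule.mem_span_pair] at hv
      obtain ⟨a, b, rfl⟩ := hv
      constructor <;>
        simp [hX, hY, hX', hY', Omega, e, Pi.single_apply] <;> ring
  · rw [hPXY, sub_zero, hbXY]
  · intro v
    rw [hPXY, sub_zero, hbXY]
    simp [Omega, e, Pi.single_apply]
  · intro v
    rw [hPX'Y']
    simp [Omega, e, Pi.single_apply]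
end
end

section
/- Let U ⊆ ℝ⁴ be open with coordinates (x,p,y,q), Ω = dp∧dx + dq∧dy, D a smooth function on U, and D the 2-distribution spanned by ∂_p and ∂_x − D∂_q, with invariant forms ρ = −D_p dy, ρ' = −D_q dx, σ = ρ − ρ' and invariant 2-form ω. Then ω ∧ dσ = Ω ∧ dρ = −D_{pq}·(½ Ω∧Ω); that is, the first scalar invariant is I¹_D = −D_{pq}. -/
noncomputable section

/-- for the 2-distribution `⟨∂_p, ∂_x − D∂_q⟩` with invariant forms
`ρ = −D_p dy`, `ρ' = −D_q dx`, `σ = ρ − ρ'` and invariant 2-form `ω`, one has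
`ω ∧ dσ = Ω ∧ dρ = −D_{pq}·(½ Ω∧Ω)`; i.e. the first scalar invariant is
`I¹ = −D_{pq}`. -/
theorem stmt_16 (U : Set Vec) (hU : IsOpen U)
    (D : Vec → ℝ) (hD : ContDiffOn ℝ (⊤ : ℕ∞) D U)
    (P : Vec → Vec →L[ℝ] Vec)
    (hProj : ∀ z ∈ U, P z (e 1) = e 1 ∧
      P z (e 0 - D z • e 3) = e 0 - D z • e 3 ∧
      P z (e 3) = 0 ∧ P z (e 2 - D z • e 1) = 0)
    (ρ ρ' σ : Vec → Vec → ℝ) (ω : Vec → Vec → Vec → ℝ)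
    (hρ : ρ = fun z v => -(pd 1 D z) * v 2)
    (hρ' : ρ' = fun z v => -(pd 3 D z) * v 0)
    (hσ : σ = fun z v => ρ z v - ρ' z v)
    (hω : ω = fun z u v => (Omega (P z u) v + Omega u (P z v)) / 2) :
    ∀ z ∈ U, ∀ a b c d : Vec,
      w22 (ω z) (d1 σ z) a b c d
        = -(pd 3 (pd 1 D) z) * (w22 Omega Omega a b c d / 2) ∧
      w22 Omega (d1 ρ z) a b c d
        = -(pd 3 (pd 1 D) z) * (w22 Omega Omega a b c d / 2) := by

  intro z hz a b c d
  -- smoothness of D near z and differentiability of its first partials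
  have hDz : ContDiffAt ℝ (⊤ : ℕ∞) D z := hD.contDiffAt (hU.mem_nhds hz)
  have hfd : ContDiffAt ℝ (1 : ℕ∞) (fderiv ℝ D) z := hDz.fderiv_right (by exact_mod_cast le_top)
  have hdiff : ∀ i : Fin 4, DifferentiableAt ℝ (pd i D) z := by
    intro i
    have : DifferentiableAt ℝ (fun y => fderiv ℝ D y (e i)) z :=
      (hfd.clm_apply contDiffAt_const).differentiableAt (by simp)
    exact this
  -- decomposition of a vector in the standard basis
  have decomp : ∀ u : Vec, u = u 0 • e 0 + u 1 • e 1 + u 2 • e 2 + u 3 • e 3 := by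
    intro u
    funext i
    fin_cases i <;>
      simp [e, Pi.single_apply]
  -- values of the linear maps fderiv (pd i D) z
  obtain ⟨L, hLdef⟩ : ∃ L : Vec →L[ℝ] ℝ, L = fderiv ℝ (pd 1 D) z := ⟨_, rfl⟩
  obtain ⟨M, hMdef⟩ : ∃ M : Vec →L[ℝ] ℝ, M = fderiv ℝ (pd 3 D) z := ⟨_, rfl⟩
  obtain ⟨L0, hL0⟩ : ∃ r : ℝ, r = L (e 0) := ⟨_, rfl⟩
  obtain ⟨L1, hL1⟩ : ∃ r : ℝ, r = L (e 1) := ⟨_, rfl⟩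
  obtain ⟨L2, hL2⟩ : ∃ r : ℝ, r = L (e 2) := ⟨_, rfl⟩
  obtain ⟨L3, hL3⟩ : ∃ r : ℝ, r = L (e 3) := ⟨_, rfl⟩
  obtain ⟨M0, hM0⟩ : ∃ r : ℝ, r = M (e 0) := ⟨_, rfl⟩
  obtain ⟨M1, hM1⟩ : ∃ r : ℝ, r = M (e 1) := ⟨_, rfl⟩
  obtain ⟨M2, hM2⟩ : ∃ r : ℝ, r = M (e 2) := ⟨_, rfl⟩
  obtain ⟨M3, hM3⟩ : ∃ r : ℝ, r = M (e 3) := ⟨_, rfl⟩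
  have hLval : ∀ u : Vec, L u = u 0 * L0 + u 1 * L1 + u 2 * L2 + u 3 * L3 := by
    intro u
    rw [hL0, hL1, hL2, hL3]
    conv_lhs => rw [decomp u]
    simp [map_add, map_smul, smul_eq_mul]
  have hMval : ∀ u : Vec, M u = u 0 * M0 + u 1 * M1 + u 2 * M2 + u 3 * M3 := by
    intro u
    rw [hM0, hM1, hM2, hM3]
    conv_lhs => rw [decomp u]
    simp [map_add, map_smul, smul_eq_mul]
  have hpd31 : pd 3 (pd 1 D) z = L3 := by rw [hL3, hLdef]; rfl
  -- derivative of the 1-forms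
  have hderσ : ∀ v : Vec, fderiv ℝ (fun y => σ y v) z = (-(v 2)) • L + v 0 • M := by
    intro v
    have H : HasFDerivAt (fun y => pd 1 D y * (-(v 2)) + pd 3 D y * v 0)
        ((-(v 2)) • L + v 0 • M) z := by
      rw [hLdef, hMdef]
      exact ((hdiff 1).hasFDerivAt.mul_const (-(v 2))).add
        ((hdiff 3).hasFDerivAt.mul_const (v 0))
    have hfun : (fun y => σ y v) = fun y => pd 1 D y * (-(v 2)) + pd 3 D y * v 0 := by
      funext y
      simp only [hσ, hρ, hρ']
      ring
    rw [hfun]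
    exact H.fderiv
  have hderρ : ∀ v : Vec, fderiv ℝ (fun y => ρ y v) z = (-(v 2)) • L := by
    intro v
    have H : HasFDerivAt (fun y => pd 1 D y * (-(v 2))) ((-(v 2)) • L) z := by
      rw [hLdef]
      exact (hdiff 1).hasFDerivAt.mul_const (-(v 2))
    have hfun : (fun y => ρ y v) = fun y => pd 1 D y * (-(v 2)) := by
      funext y
      simp only [hρ]
      ring
    rw [hfun]
    exact H.fderiv
  have hdσ : ∀ u v : Vec, d1 σ z u v
      = ((-(v 2)) * L u + v 0 * M u) - ((-(u 2)) * L v + u 0 * M v) := by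
    intro u v
    simp [d1, hderσ, ContinuousLinearMap.add_apply, ContinuousLinearMap.coe_smul',
      Pi.smul_apply, smul_eq_mul]
  have hdρ : ∀ u v : Vec, d1 ρ z u v = (-(v 2)) * L u - (-(u 2)) * L v := by
    intro u v
    simp [d1, hderρ, ContinuousLinearMap.coe_smul', Pi.smul_apply, smul_eq_mul]
  -- computation of the projector on the basis, and of ω
  obtain ⟨h1, h2, h3, h4⟩ := hProj z hz
  have hP0 : P z (e 0) = e 0 - D z • e 3 := by
    have := h2
    rw [map_sub, map_smul, h3, smul_zero, sub_zero] at this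
    exact this
  have hP2 : P z (e 2) = D z • e 1 := by
    have := h4
    rw [map_sub, map_smul, h1, sub_eq_zero] at this
    exact this
  have hPc : ∀ u : Vec, (P z u) 0 = u 0 ∧ (P z u) 1 = u 1 + D z * u 2 ∧
      (P z u) 2 = 0 ∧ (P z u) 3 = -(D z * u 0) := by
    intro u
    have hPu : P z u = u 0 • (e 0 - D z • e 3) + u 1 • e 1 + u 2 • (D z • e 1) := by
      conv_lhs => rw [decomp u]
      rw [map_add, map_add, map_add, map_smul, map_smul, map_smul, map_smul,
        hP0, h1, hP2, h3, smul_zero, add_zero]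
    refine ⟨?_, ?_, ?_, ?_⟩ <;>
      · rw [hPu]
        simp [e, Pi.single_apply]
        try ring
  have hω2 : ∀ u v : Vec, ω z u v
      = u 1 * v 0 - u 0 * v 1 + D z * (u 2 * v 0 - u 0 * v 2) := by
    intro u v
    obtain ⟨hu0, hu1, hu2, hu3⟩ := hPc u
    obtain ⟨hv0, hv1, hv2, hv3⟩ := hPc v
    rw [hω]
    simp only [Omega, hu0, hu1, hu2, hu3, hv0, hv1, hv2, hv3]
    ring
  -- final polynomial identity
  constructor
  · simp only [w22, hω2, hdσ, hLval, hMval, hpd31, Omega]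
    ring
  · simp only [w22, hdρ, hLval, hpd31, Omega]
    ring
end
end

section
/- Let U ⊆ ℝ⁴ be open with coordinates (x,p,y,q), Ω = dp∧dx + dq∧dy, D a smooth function on U, and D the 2-distribution spanned by ∂_p and ∂_x − D∂_q, with invariant forms ρ = −D_p dy, ρ' = −D_q dx, σ = ρ − ρ'. Then, as 4-forms on U: dσ ∧ dσ = 2(D_{pp}D_{qq} − D_{pq}²)·(½Ω∧Ω), dσ ∧ dρ = (D_{pp}D_{qq} − D_{pq}²)·(½Ω∧Ω), and σ∧ρ∧dσ = σ∧ρ∧dρ = dρ∧dρ = 0. Hence the scalar invariants satisfy I⁴_D = −2D_{pq}² + 2D_{pp}D_{qq}, I⁵_D = ½ I⁴_D, and I²_D = I³_D = I⁶_D = 0. -/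
noncomputable section

/-- for the 2-distribution `⟨∂_p, ∂_x − D∂_q⟩` with invariant forms
`ρ = −D_p dy`, `ρ' = −D_q dx`, `σ = ρ − ρ'`, as 4-forms on `U`:
`dσ∧dσ = 2(D_{pp}D_{qq} − D_{pq}²)·(½Ω∧Ω)`,
`dσ∧dρ = (D_{pp}D_{qq} − D_{pq}²)·(½Ω∧Ω)`, and
`σ∧ρ∧dσ = σ∧ρ∧dρ = dρ∧dρ = 0`; hence `I⁴ = −2D_{pq}² + 2D_{pp}D_{qq}`,
`I⁵ = ½I⁴` and `I² = I³ = I⁶ = 0`. -/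
theorem stmt_17 (U : Set Vec) (hU : IsOpen U)
    (D : Vec → ℝ) (hD : ContDiffOn ℝ (⊤ : ℕ∞) D U)
    (ρ ρ' σ : Vec → Vec → ℝ)
    (hρ : ρ = fun z v => -(pd 1 D z) * v 2)
    (hρ' : ρ' = fun z v => -(pd 3 D z) * v 0)
    (hσ : σ = fun z v => ρ z v - ρ' z v) :
    ∀ z ∈ U, ∀ a b c d : Vec,
      w22 (d1 σ z) (d1 σ z) a b c d
        = 2 * (pd 1 (pd 1 D) z * pd 3 (pd 3 D) z - pd 3 (pd 1 D) z ^ 2)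
            * (w22 Omega Omega a b c d / 2) ∧
      w22 (d1 σ z) (d1 ρ z) a b c d
        = (pd 1 (pd 1 D) z * pd 3 (pd 3 D) z - pd 3 (pd 1 D) z ^ 2)
            * (w22 Omega Omega a b c d / 2) ∧
      w22 (w11 (σ z) (ρ z)) (d1 σ z) a b c d = 0 ∧
      w22 (w11 (σ z) (ρ z)) (d1 ρ z) a b c d = 0 ∧
      w22 (d1 ρ z) (d1 ρ z) a b c d = 0 := by
  intro z hz a b c d
  have hDz : ContDiffAt ℝ (⊤ : ℕ∞) D z := hD.contDiffAt (hU.mem_nhds hz)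
  have hf1 : ContDiffAt ℝ (⊤ : ℕ∞) (fderiv ℝ D) z :=
    hDz.fderiv_right (by exact_mod_cast le_top)
  have hdf : DifferentiableAt ℝ (fderiv ℝ D) z :=
    hf1.differentiableAt (by simp)
  have hpd : ∀ i : Fin 4, DifferentiableAt ℝ (pd i D) z := by
    intro i
    have h : ContDiffAt ℝ (⊤ : ℕ∞) (fun y => fderiv ℝ D y (e i)) z :=
      hf1.clm_apply contDiffAt_const
    exact h.differentiableAt (by simp)
  have hsym : IsSymmSndFDerivAt ℝ D z :=
    hDz.isSymmSndFDerivAt (by rw [minSmoothness_of_isRCLikeNormedField]; exact WithTop.coe_le_coe.mpr (le_top : (2:ℕ∞) ≤ ⊤))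
  have key : ∀ (j : Fin 4) (v : Vec),
      fderiv ℝ (pd j D) z v = fderiv ℝ (fderiv ℝ D) z v (e j) := by
    intro j v
    have h : fderiv ℝ (fun y => fderiv ℝ D y (e j)) z
        = (fderiv ℝ D z).comp (fderiv ℝ (fun _ : Vec => e j) z)
          + (fderiv ℝ (fderiv ℝ D) z).flip (e j) :=
      fderiv_clm_apply hdf (differentiableAt_const _)
    show fderiv ℝ (fun y => fderiv ℝ D y (e j)) z v = _
    rw [h]
    simp
  have hlin : ∀ (L : Vec →L[ℝ] ℝ) (v : Vec),
      L v = v 0 * L (e 0) + v 1 * L (e 1) + v 2 * L (e 2) + v 3 * L (e 3) := by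
    intro L v
    have hv : v = v 0 • e 0 + v 1 • e 1 + v 2 • e 2 + v 3 • e 3 := by
      funext i; fin_cases i <;> simp [e, Pi.single_apply]
    conv_lhs => rw [hv]
    simp [smul_eq_mul]
  set L := fderiv ℝ (pd 1 D) z with hLdef
  set M := fderiv ℝ (pd 3 D) z with hMdef
  have hB1 : M (e 1) = L (e 3) := by
    rw [hLdef, hMdef, key 3 (e 1), key 1 (e 3), hsym (e 1) (e 3)]
  have hρd : ∀ (c : ℝ), HasFDerivAt (fun y => -(pd 1 D y) * c) (c • (-L)) z :=
    fun c => ((hpd 1).hasFDerivAt.neg.mul_const c)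
  have hρ'd : ∀ (c : ℝ), HasFDerivAt (fun y => -(pd 3 D y) * c) (c • (-M)) z :=
    fun c => ((hpd 3).hasFDerivAt.neg.mul_const c)
  have hdρ : ∀ u v : Vec, d1 ρ z u v = u 2 * L v - v 2 * L u := by
    intro u v
    simp only [d1, hρ]
    rw [(hρd (v 2)).fderiv, (hρd (u 2)).fderiv]
    simp only [ContinuousLinearMap.smul_apply, ContinuousLinearMap.neg_apply, smul_eq_mul]
    ring
  have hdσ : ∀ u v : Vec, d1 σ z u v
      = (u 2 * L v - v 2 * L u) - (u 0 * M v - v 0 * M u) := by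
    intro u v
    simp only [d1, hσ, hρ, hρ']
    rw [(show HasFDerivAt (fun y => -pd 1 D y * v 2 - -pd 3 D y * v 0) _ z from (hρd (v 2)).sub (hρ'd (v 0))).fderiv, (show HasFDerivAt (fun y => -pd 1 D y * u 2 - -pd 3 D y * u 0) _ z from (hρd (u 2)).sub (hρ'd (u 0))).fderiv]
    simp only [ContinuousLinearMap.sub_apply, ContinuousLinearMap.smul_apply,
      ContinuousLinearMap.neg_apply, smul_eq_mul]
    ring
  have h11 : pd 1 (pd 1 D) z = L (e 1) := rfl
  have h33 : pd 3 (pd 3 D) z = M (e 3) := rfl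
  have h31 : pd 3 (pd 1 D) z = L (e 3) := rfl
  have hLa := hlin L a
  have hLb := hlin L b
  have hLc := hlin L c
  have hLd := hlin L d
  have hMa := hlin M a
  have hMb := hlin M b
  have hMc := hlin M c
  have hMd := hlin M d
  refine ⟨?_, ?_, ?_, ?_, ?_⟩
  · simp only [w22, Omega, hdσ, h11, h33, h31]
    rw [hLa, hLb, hLc, hLd, hMa, hMb, hMc, hMd, hB1]
    ring
  · simp only [w22, Omega, hdσ, hdρ, h11, h33, h31]
    rw [hLa, hLb, hLc, hLd, hMa, hMb, hMc, hMd, hB1]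
    ring
  · simp only [w22, w11, hdσ]
    simp only [hσ, hρ, hρ']
    rw [hLa, hLb, hLc, hLd, hMa, hMb, hMc, hMd, hB1]
    ring
  · simp only [w22, w11, hdρ]
    simp only [hσ, hρ, hρ']
    rw [hLa, hLb, hLc, hLd]
    ring
  · simp only [w22, hdρ]
    rw [hLa, hLb, hLc, hLd]
    ring
end
end

section
/- Let U ⊆ ℝ⁴ be open with coordinates (x,p,y,q), Ω = dp∧dx + dq∧dy, D a smooth function on U, and consider the 2-distribution spanned by ∂_p and ∂_x − D∂_q, with invariant vector fields Z = −D_p ∂_q, Z' = −D_q ∂_p and invariant 1-forms ρ = −D_p dy, ρ' = −D_q dx. Then the Lie derivatives satisfy: ℒ_Z ρ = −D_{pq}·ρ and ℒ_{Z'} ρ' = −D_{pq}·ρ'; moreover ℒ_Z ρ' = D_p D_{qq}·dx, so that ℒ_Z ρ' = (−D_p D_{qq}/D_q)·ρ' wherever D_q ≠ 0, and ℒ_{Z'} ρ = D_q D_{pp}·dy, so that ℒ_{Z'} ρ = (−D_q D_{pp}/D_p)·ρ wherever D_p ≠ 0. (The factors I¹²_D = −D_p D_{qq}/D_q and I²¹_D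 = −D_q D_{pp}/D_p are the special scalar differential invariants of such distributions.) -/
noncomputable section

/-- Lie derivative of a (pointwise) 1-form `α` along a vector field `X`,
evaluated on a constant vector `v`. -/
def lie1 (X : Vec → Vec) (α : Vec → Vec → ℝ) : Vec → Vec → ℝ :=
  fun z v => fderiv ℝ (fun y => α y v) z (X z) + α z (fderiv ℝ X z v)
/-- for the 2-distribution `⟨∂_p, ∂_x − D∂_q⟩` with invariant
vector fields `Z = −D_p ∂_q`, `Z' = −D_q ∂_p` and invariant 1-forms
`ρ = −D_p dy`, `ρ' = −D_q dx`: `ℒ_Z ρ = −D_{pq}·ρ`, `ℒ_{Z'} ρ' = −D_{pq}·ρ'`,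
`ℒ_Z ρ' = D_p D_{qq}·dx` (so `ℒ_Z ρ' = (−D_p D_{qq}/D_q)·ρ'` wherever
`D_q ≠ 0`), and `ℒ_{Z'} ρ = D_q D_{pp}·dy` (so `ℒ_{Z'} ρ = (−D_q D_{pp}/D_p)·ρ`
wherever `D_p ≠ 0`). -/
theorem stmt_18 (U : Set Vec) (hU : IsOpen U)
    (D : Vec → ℝ) (hD : ContDiffOn ℝ (⊤ : ℕ∞) D U)
    (Z Z' : Vec → Vec)
    (hZ : Z = fun z => (-(pd 1 D z)) • e 3)
    (hZ' : Z' = fun z => (-(pd 3 D z)) • e 1)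
    (ρ ρ' : Vec → Vec → ℝ)
    (hρ : ρ = fun z v => -(pd 1 D z) * v 2)
    (hρ' : ρ' = fun z v => -(pd 3 D z) * v 0) :
    ∀ z ∈ U, ∀ v : Vec,
      lie1 Z ρ z v = -(pd 3 (pd 1 D) z) * ρ z v ∧
      lie1 Z' ρ' z v = -(pd 3 (pd 1 D) z) * ρ' z v ∧
      lie1 Z ρ' z v = pd 1 D z * pd 3 (pd 3 D) z * v 0 ∧
      (pd 3 D z ≠ 0 →
        lie1 Z ρ' z v = (-(pd 1 D z * pd 3 (pd 3 D) z) / pd 3 D z) * ρ' z v) ∧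
      lie1 Z' ρ z v = pd 3 D z * pd 1 (pd 1 D) z * v 2 ∧
      (pd 1 D z ≠ 0 →
        lie1 Z' ρ z v = (-(pd 3 D z * pd 1 (pd 1 D) z) / pd 1 D z) * ρ z v) := by
  intro z hz v
  have hzU : U ∈ nhds z := hU.mem_nhds hz
  have hDz : ContDiffAt ℝ (⊤ : ℕ∞) D z := hD.contDiffAt hzU
  have hD1 : ContDiffAt ℝ 1 (fderiv ℝ D) z := hDz.fderiv_right (by exact WithTop.coe_le_coe.mpr le_top)
  have hdiff2 : DifferentiableAt ℝ (fderiv ℝ D) z := hD1.differentiableAt one_ne_zero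
  set A := fderiv ℝ (fderiv ℝ D) z with hA
  have hpd : ∀ j : Fin 4,
      HasFDerivAt (pd j D) ((ContinuousLinearMap.apply ℝ ℝ (e j)).comp A) z := by
    intro j
    exact (ContinuousLinearMap.apply ℝ ℝ (e j)).hasFDerivAt.comp z hdiff2.hasFDerivAt
  have hpdpd : ∀ i j : Fin 4, pd i (pd j D) z = A (e i) (e j) := by
    intro i j
    show fderiv ℝ (pd j D) z (e i) = A (e i) (e j)
    rw [(hpd j).fderiv]
    rfl
  have hsymm : ∀ u w : Vec, A u w = A w u := by
    intro u w
    refine second_derivative_symmetric_of_eventually (f := D) ?_ hdiff2.hasFDerivAt u w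
    filter_upwards [hzU] with y hy
    exact (((hD.differentiableOn (by simp)) y hy).differentiableAt (hU.mem_nhds hy)).hasFDerivAt
  -- derivative of the coefficient functions
  have key : ∀ (j : Fin 4) (k : Fin 4) (u : Vec),
      fderiv ℝ (fun y => -(pd j D y) * v k) z u = -(A u (e j)) * v k := by
    intro j k u
    have h := (((hpd j).neg).mul_const (v k)).fderiv
    rw [show (fun y => -(pd j D y) * v k) = fun y => (-pd j D) y * v k from rfl, h]
    simp [mul_comm]
  -- derivative of the vector fields
  have keyZ : ∀ (j : Fin 4) (i : Fin 4),
      fderiv ℝ (fun y => (-(pd j D y)) • e i) z v = (-(A v (e j))) • e i := by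
    intro j i
    have h := (((hpd j).neg).smul_const (e i)).fderiv
    rw [show (fun y => (-(pd j D y)) • e i) = fun y => (-pd j D) y • e i from rfl, h]
    simp
  have e32 : e 3 2 = 0 := by simp [e, Pi.single]
  have e10 : e 1 0 = 0 := by simp [e, Pi.single]
  have hZz : Z z = (-(pd 1 D z)) • e 3 := by rw [hZ]
  have hZ'z : Z' z = (-(pd 3 D z)) • e 1 := by rw [hZ']
  -- first term computations
  have t1 : ∀ j k : Fin 4, fderiv ℝ (fun y => ρ y v) z ((-(pd j D z)) • e k) =
      -((-(pd j D z)) * A (e k) (e 1)) * v 2 := by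
    intro j k
    rw [hρ, key 1 2, map_smul]
    simp [mul_comm]
  have t1' : ∀ j k : Fin 4, fderiv ℝ (fun y => ρ' y v) z ((-(pd j D z)) • e k) =
      -((-(pd j D z)) * A (e k) (e 3)) * v 0 := by
    intro j k
    rw [hρ', key 3 0, map_smul]
    simp [mul_comm]
  -- second terms vanish
  have s1 : ρ z (fderiv ℝ Z z v) = 0 := by
    rw [hρ, hZ, keyZ 1 3]
    simp [e32]
  have s1' : ρ' z (fderiv ℝ Z' z v) = 0 := by
    rw [hρ', hZ', keyZ 3 1]
    simp [e10]
  have s2 : ρ' z (fderiv ℝ Z z v) = 0 := by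
    rw [hρ', hZ, keyZ 1 3]
    simp [e10, e]
  have s2' : ρ z (fderiv ℝ Z' z v) = 0 := by
    rw [hρ, hZ', keyZ 3 1]
    simp [e32, e]
  have L1 : lie1 Z ρ z v = pd 1 D z * A (e 3) (e 1) * v 2 := by
    unfold lie1
    rw [hZz, t1 1 3, s1]; ring
  have L2 : lie1 Z' ρ' z v = pd 3 D z * A (e 1) (e 3) * v 0 := by
    unfold lie1
    rw [hZ'z, t1' 3 1, s1']; ring
  have L3 : lie1 Z ρ' z v = pd 1 D z * A (e 3) (e 3) * v 0 := by
    unfold lie1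
    rw [hZz, t1' 1 3, s2]; ring
  have L4 : lie1 Z' ρ z v = pd 3 D z * A (e 1) (e 1) * v 2 := by
    unfold lie1
    rw [hZ'z, t1 3 1, s2']; ring
  refine ⟨?_, ?_, ?_, ?_, ?_, ?_⟩
  · rw [L1, hρ, hpdpd 3 1]; ring
  · rw [L2, hρ', hpdpd 3 1, hsymm (e 1) (e 3)]; ring
  · rw [L3, hpdpd 3 3]
  · intro hq
    rw [L3, hρ', hpdpd 3 3]
    field_simp
  · rw [L4, hpdpd 1 1]
  · intro hp
    rw [L4, hρ, hpdpd 1 1]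
    field_simp
end
end
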